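/- arXiv:1610.01329 — 9 statements merged into one kernel-verified Lean document; each statement's English description precedes it below -/
import Mathlib

section
/- Theta decomposition of the square: ϑ(z+1/2; τ)² = θ_{1,1}(τ) ϑ_{1,0}(z;τ) + θ_{1,0}(τ) ϑ_{1,1}(z;τ), where ϑ_{m,a}(z;τ) := Σ_{n∈ℤ} q^{(2mn+a)²/(4m)} ζ^{2mn+a} and θ_{m,a}(τ) := ϑ_{m,a}(0;τ). -/
open Complex

/-- The q-Pochhammer symbol `(a;q)_∞ = ∏_{n ≥ 1} (1 - a q^{n-1})`. -/
noncomputable def qPoch (a q : ℂ) : ℂ := ∏' n : ℕ, (1 - a * q ^ n)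

/-- The Jacobi theta function `ϑ(z;τ) = ∑_{n ∈ 1/2 + ℤ} e^{πi n² τ + 2πi n (z + 1/2)}`. -/
noncomputable def jTheta (z τ : ℂ) : ℂ :=
  ∑' n : ℤ, Complex.exp ((Real.pi : ℂ) * I * ((n : ℂ) + 1/2) ^ 2 * τ +
    2 * (Real.pi : ℂ) * I * ((n : ℂ) + 1/2) * (z + 1/2))

/-- `ϑ_{m,a}(z;τ) = ∑_{n ∈ ℤ} q^{(2mn+a)²/(4m)} ζ^{2mn+a}` with `q = e^{2πiτ}`, `ζ = e^{2πiz}`,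
fractional powers interpreted via `q^x = e^{2πiτx}`, `ζ^x = e^{2πizx}`. -/
noncomputable def thetaMA (m a : ℝ) (z τ : ℂ) : ℂ :=
  ∑' n : ℤ, Complex.exp (2 * (Real.pi : ℂ) * I * τ * ((2 * m * n + a) ^ 2 / (4 * m)) +
    2 * (Real.pi : ℂ) * I * z * (2 * m * n + a))

/-- The theta constant `θ_{m,a}(τ) = ϑ_{m,a}(0;τ)`. -/
noncomputable def thetaC (m a : ℝ) (τ : ℂ) : ℂ := thetaMA m a 0 τ

private lemma sumNormJTT (w τ : ℂ) (hτ : 0 < τ.im) :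
    Summable fun n : ℤ => ‖jacobiTheta₂_term n w τ‖ :=
  Summable.of_nonneg_of_le (fun _ => norm_nonneg _)
    (fun n => by simpa only [pow_zero, one_mul] using
      norm_jacobiTheta₂_term_le hτ (le_refl |w.im|) le_rfl n)
    (summable_pow_mul_jacobiTheta₂_term_bound |w.im| hτ 0)

private lemma exp_add_int_phase (y : ℂ) (n : ℤ) :
    Complex.exp (y + (n : ℂ) * (2 * Real.pi * I)) = Complex.exp y := by
  rw [Complex.exp_add, Complex.exp_int_mul_two_pi_mul_I, mul_one]

/-- Theta decomposition of `ϑ(z+1/2;τ)²`. -/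
theorem theta_sq_decomposition (τ z : ℂ) (hτ : 0 < τ.im) :
    jTheta (z + 1/2) τ ^ 2 =
      thetaC 1 1 τ * thetaMA 1 0 z τ + thetaC 1 0 τ * thetaMA 1 1 z τ := by
  have h2τ : 0 < (2 * τ).im := by
    have : (2 * τ).im = 2 * τ.im := by simp [Complex.mul_im]
    rw [this]; linarith
  set c₀ : ℂ := Complex.exp ((Real.pi : ℂ) * I * τ / 4 + (Real.pi : ℂ) * I * (z + 1)) with hc₀
  set c₁ : ℂ := Complex.exp ((Real.pi : ℂ) * I * τ / 2 + 2 * (Real.pi : ℂ) * I * z) with hc₁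
  set c₂ : ℂ := Complex.exp ((Real.pi : ℂ) * I * τ / 2) with hc₂
  set A : ℤ → ℂ := fun n => c₀ * jacobiTheta₂_term n (z + 1 + τ / 2) τ with hA
  -- identify jTheta (z+1/2) τ with ∑' A
  have hJ : jTheta (z + 1/2) τ = ∑' n : ℤ, A n := by
    rw [jTheta]
    refine tsum_congr fun n => ?_
    simp only [hA, hc₀, jacobiTheta₂_term, ← Complex.exp_add]
    congr 1
    ring
  -- identify the four series on the RHS
  have hM0 : thetaMA 1 0 z τ = ∑' n : ℤ, jacobiTheta₂_term n (2 * z) (2 * τ) := by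
    rw [thetaMA]
    refine tsum_congr fun n => ?_
    simp only [jacobiTheta₂_term]
    congr 1
    push_cast
    ring
  have hM1 : thetaMA 1 1 z τ = ∑' n : ℤ, c₁ * jacobiTheta₂_term n (2 * z + τ) (2 * τ) := by
    rw [thetaMA]
    refine tsum_congr fun n => ?_
    simp only [hc₁, jacobiTheta₂_term, ← Complex.exp_add]
    congr 1
    push_cast
    ring
  have hC0 : thetaC 1 0 τ = ∑' n : ℤ, jacobiTheta₂_term n 0 (2 * τ) := by
    rw [thetaC, thetaMA]
    refine tsum_congr fun n => ?_
    simp only [jacobiTheta₂_term]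
    congr 1
    push_cast
    ring
  have hC1 : thetaC 1 1 τ = ∑' n : ℤ, c₂ * jacobiTheta₂_term n τ (2 * τ) := by
    rw [thetaC, thetaMA]
    refine tsum_congr fun n => ?_
    simp only [hc₂, jacobiTheta₂_term, ← Complex.exp_add]
    congr 1
    push_cast
    ring
  -- norm summability
  have hA' : Summable fun n : ℤ => ‖A n‖ := by
    have := (sumNormJTT (z + 1 + τ / 2) τ hτ).mul_left ‖c₀‖
    simpa only [hA, norm_mul] using this
  have hM0' : Summable fun n : ℤ => ‖jacobiTheta₂_term n (2 * z) (2 * τ)‖ :=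
    sumNormJTT _ _ h2τ
  have hM1' : Summable fun n : ℤ => ‖c₁ * jacobiTheta₂_term n (2 * z + τ) (2 * τ)‖ := by
    have := (sumNormJTT (2 * z + τ) (2 * τ) h2τ).mul_left ‖c₁‖
    simpa only [norm_mul] using this
  have hC0' : Summable fun n : ℤ => ‖jacobiTheta₂_term n 0 (2 * τ)‖ := sumNormJTT _ _ h2τ
  have hC1' : Summable fun n : ℤ => ‖c₂ * jacobiTheta₂_term n τ (2 * τ)‖ := by
    have := (sumNormJTT τ (2 * τ) h2τ).mul_left ‖c₂‖
    simpa only [norm_mul] using this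
  -- the double sum
  set F : ℤ × ℤ → ℂ := fun p => A p.1 * A p.2 with hF
  have hFsum : Summable F := summable_mul_of_summable_norm hA' hA'
  have hSq : jTheta (z + 1/2) τ ^ 2 = ∑' p : ℤ × ℤ, F p := by
    rw [hJ, sq, tsum_mul_tsum_of_summable_norm hA' hA']
  -- split by parity of p.1 + p.2
  set S : Set (ℤ × ℤ) := {p | (p.1 + p.2) % 2 = 0} with hS
  have hsplit : ∑' p : ℤ × ℤ, F p =
      (∑' p : ℤ × ℤ, S.indicator F p) + ∑' p : ℤ × ℤ, Sᶜ.indicator F p := by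
    rw [← Summable.tsum_add (hFsum.indicator S) (hFsum.indicator Sᶜ)]
    refine tsum_congr fun p => ?_
    have := congrFun (Set.indicator_self_add_compl S F) p
    simp only [Pi.add_apply] at this
    exact this.symm
  -- key pointwise identities
  have key_even : ∀ k l : ℤ, A (l + k) * A (l - k) =
      (jacobiTheta₂_term k 0 (2 * τ)) * (c₁ * jacobiTheta₂_term l (2 * z + τ) (2 * τ)) := by
    intro k l
    simp only [hA, hc₀, hc₁, jacobiTheta₂_term, ← Complex.exp_add]
    rw [Complex.exp_eq_exp_iff_exists_int]
    exact ⟨2 * l + 1, by push_cast; ring⟩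
  have key_odd : ∀ k l : ℤ, A (l + k) * A (l - k - 1) =
      (c₂ * jacobiTheta₂_term k τ (2 * τ)) * (jacobiTheta₂_term l (2 * z) (2 * τ)) := by
    intro k l
    simp only [hA, hc₀, hc₂, jacobiTheta₂_term, ← Complex.exp_add]
    rw [Complex.exp_eq_exp_iff_exists_int]
    exact ⟨2 * l, by push_cast; ring⟩
  -- even part
  have heven : (∑' p : ℤ × ℤ, S.indicator F p) = thetaC 1 0 τ * thetaMA 1 1 z τ := by
    set G : ℤ × ℤ → ℤ × ℤ := fun q => (q.2 + q.1, q.2 - q.1) with hG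
    have hGinj : Function.Injective G := by
      intro a b hab
      rw [hG, Prod.mk.injEq] at hab
      have h1 := hab.1; have h2 := hab.2
      refine Prod.ext ?_ ?_ <;> omega
    have hGsupp : Function.support (S.indicator F) ⊆ Set.range G := by
      intro p hp
      have hpS : p ∈ S := by
        by_contra h
        exact hp (Set.indicator_of_notMem h F)
      rw [hS, Set.mem_setOf_eq] at hpS
      obtain ⟨x, y⟩ := p
      simp only [hS, Set.mem_setOf_eq] at hpS
      exact ⟨((x - y) / 2, (x + y) / 2), by
        rw [hG]; refine Prod.ext ?_ ?_ <;> simp only [] <;> omega⟩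
    rw [← Function.Injective.tsum_eq hGinj hGsupp]
    have : ∀ q : ℤ × ℤ, S.indicator F (G q) =
        (jacobiTheta₂_term q.1 0 (2 * τ)) *
          (c₁ * jacobiTheta₂_term q.2 (2 * z + τ) (2 * τ)) := by
      intro q
      have hmem : G q ∈ S := by
        obtain ⟨a, b⟩ := q
        simp only [hG, hS, Set.mem_setOf_eq]
        omega
      rw [Set.indicator_of_mem hmem, hF, hG]
      exact key_even q.1 q.2
    rw [tsum_congr this, ← tsum_mul_tsum_of_summable_norm hC0' hM1', ← hC0, ← hM1]
  -- odd part
  have hodd : (∑' p : ℤ × ℤ, Sᶜ.indicator F p) = thetaC 1 1 τ * thetaMA 1 0 z τ := by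
    set G : ℤ × ℤ → ℤ × ℤ := fun q => (q.2 + q.1, q.2 - q.1 - 1) with hG
    have hGinj : Function.Injective G := by
      intro a b hab
      rw [hG, Prod.mk.injEq] at hab
      have h1 := hab.1; have h2 := hab.2
      refine Prod.ext ?_ ?_ <;> omega
    have hGsupp : Function.support (Sᶜ.indicator F) ⊆ Set.range G := by
      intro p hp
      have hpS : p ∈ Sᶜ := by
        by_contra h
        exact hp (Set.indicator_of_notMem h F)
      rw [hS, Set.mem_compl_iff, Set.mem_setOf_eq] at hpS
      obtain ⟨x, y⟩ := p
      simp only [hS, Set.mem_compl_iff, Set.mem_setOf_eq] at hpS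
      exact ⟨((x - y - 1) / 2, (x + y + 1) / 2), by
        rw [hG]; refine Prod.ext ?_ ?_ <;> simp only [] <;> omega⟩
    rw [← Function.Injective.tsum_eq hGinj hGsupp]
    have : ∀ q : ℤ × ℤ, Sᶜ.indicator F (G q) =
        (c₂ * jacobiTheta₂_term q.1 τ (2 * τ)) *
          (jacobiTheta₂_term q.2 (2 * z) (2 * τ)) := by
      intro q
      have hmem : G q ∈ Sᶜ := by
        obtain ⟨a, b⟩ := q
        simp only [hG, hS, Set.mem_compl_iff, Set.mem_setOf_eq]
        omega
      rw [Set.indicator_of_mem hmem, hF, hG]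
      exact key_odd q.1 q.2
    rw [tsum_congr this, ← tsum_mul_tsum_of_summable_norm hC1' hM0', ← hC1, ← hM0]
  rw [hSq, hsplit, heven, hodd]
  ring
end

section
/- For integers ℓ ≥ 1 and 0 ≤ c < ℓ: -ϑ(z+1/2; τ) ϑ_{ℓ,c}(z;τ) = Σ_{a mod 2ℓ+1} θ_{ℓ(2ℓ+1), c - 2ℓa - ℓ}(τ) ϑ_{ℓ+1/2, a+c+1/2}(z;τ). -/
open Complex

/-! ### Auxiliary definitions and lemmas -/

/-- A single term of `thetaMA`. -/
noncomputable def tmaTerm (m a : ℝ) (z τ : ℂ) (n : ℤ) : ℂ :=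
  Complex.exp (2 * (Real.pi : ℂ) * I * τ * ((2 * m * n + a) ^ 2 / (4 * m)) +
    2 * (Real.pi : ℂ) * I * z * (2 * m * n + a))

lemma thetaMA_eq (m a : ℝ) (z τ : ℂ) : thetaMA m a z τ = ∑' n : ℤ, tmaTerm m a z τ n := rfl

/-- A single term of the series for `-ϑ(z + 1/2; τ)`. -/
noncomputable def lTerm (z τ : ℂ) (n : ℤ) : ℂ :=
  Complex.exp ((Real.pi : ℂ) * I * τ * ((n : ℂ) + 1/2) ^ 2 +
    2 * (Real.pi : ℂ) * I * ((n : ℂ) + 1/2) * z)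

lemma summable_norm_gen (τ : ℂ) (hτ : 0 < τ.im) (α : ℝ) (hα : 0 < α) (γ δ : ℂ) :
    Summable fun n : ℤ => ‖Complex.exp ((Real.pi : ℂ) * I * (α : ℂ) * τ * (n : ℂ) ^ 2 +
      2 * (Real.pi : ℂ) * I * (n : ℂ) * γ + δ)‖ := by
  have him : 0 < ((α : ℂ) * τ).im := by
    rw [Complex.mul_im, Complex.ofReal_re, Complex.ofReal_im]
    simpa using mul_pos hα hτ
  have h1 : Summable fun n : ℤ => ‖jacobiTheta₂_term n γ ((α : ℂ) * τ)‖ := by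
    refine (summable_pow_mul_jacobiTheta₂_term_bound |γ.im| him 0).of_nonneg_of_le
      (fun _ => norm_nonneg _) fun n => ?_
    simpa only [pow_zero, one_mul] using norm_jacobiTheta₂_term_le him le_rfl le_rfl n
  refine (h1.mul_right ‖Complex.exp δ‖).congr fun n => ?_
  rw [← norm_mul, jacobiTheta₂_term, ← Complex.exp_add]
  congr 2
  ring

lemma summable_norm_tma (m a : ℝ) (hm : 0 < m) (z τ : ℂ) (hτ : 0 < τ.im) :
    Summable fun n : ℤ => ‖tmaTerm m a z τ n‖ := by
  have hm' : (m : ℂ) ≠ 0 := by exact_mod_cast hm.ne'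
  refine (summable_norm_gen τ hτ (2 * m) (by positivity)
    ((a : ℂ) * τ + 2 * (m : ℂ) * z)
    ((Real.pi : ℂ) * I * τ * (a : ℂ) ^ 2 / (2 * (m : ℂ)) +
      2 * (Real.pi : ℂ) * I * z * (a : ℂ))).congr fun n => ?_
  unfold tmaTerm
  congr 2
  push_cast
  field_simp
  ring

lemma summable_norm_l (z τ : ℂ) (hτ : 0 < τ.im) :
    Summable fun n : ℤ => ‖lTerm z τ n‖ := by
  refine (summable_norm_gen τ hτ 1 one_pos (τ/2 + z)
    ((Real.pi : ℂ) * I * τ / 4 + (Real.pi : ℂ) * I * z)).congr fun n => ?_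
  unfold lTerm
  congr 2
  push_cast
  ring

lemma jTheta_shift (z τ : ℂ) : jTheta (z + 1/2) τ = -∑' n : ℤ, lTerm z τ n := by
  rw [← tsum_neg]
  simp only [jTheta]
  refine tsum_congr fun n => ?_
  unfold lTerm
  have h : (Real.pi : ℂ) * I * ((n : ℂ) + 1/2) ^ 2 * τ +
      2 * (Real.pi : ℂ) * I * ((n : ℂ) + 1/2) * (z + 1/2 + 1/2)
      = ((Real.pi : ℂ) * I * τ * ((n : ℂ) + 1/2) ^ 2 +
        2 * (Real.pi : ℂ) * I * ((n : ℂ) + 1/2) * z)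
        + ((n : ℂ) * (2 * (Real.pi : ℂ) * I) + (Real.pi : ℂ) * I) := by ring
  rw [h, Complex.exp_add, Complex.exp_add, Complex.exp_add,
    Complex.exp_int_mul_two_pi_mul_I, Complex.exp_pi_mul_I]
  ring

/-- The reindexing bijection `(a, s, t) ↦ (t - 2ℓs + a, t + s)`. -/
def sigEquiv (ℓ : ℕ) : (Fin (2 * ℓ + 1) × ℤ × ℤ) ≃ ℤ × ℤ where
  toFun q := (q.2.2 - 2 * (ℓ : ℤ) * q.2.1 + (q.1.val : ℤ), q.2.2 + q.2.1)
  invFun p := (⟨((p.1 - p.2) % (2 * (ℓ : ℤ) + 1)).toNat, by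
      have h1 : 0 ≤ (p.1 - p.2) % (2 * (ℓ : ℤ) + 1) :=
        Int.emod_nonneg _ (by positivity)
      have h2 : (p.1 - p.2) % (2 * (ℓ : ℤ) + 1) < 2 * (ℓ : ℤ) + 1 :=
        Int.emod_lt_of_pos _ (by positivity)
      omega⟩,
    (-((p.1 - p.2) / (2 * (ℓ : ℤ) + 1)), p.2 + (p.1 - p.2) / (2 * (ℓ : ℤ) + 1)))
  left_inv := by
    rintro ⟨a, s, t⟩
    have ha0 : (0 : ℤ) ≤ (a.val : ℤ) := Int.natCast_nonneg _
    have ha1 : (a.val : ℤ) < 2 * (ℓ : ℤ) + 1 := by exact_mod_cast a.isLt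
    have hd : (t - 2 * (ℓ : ℤ) * s + (a.val : ℤ)) - (t + s)
        = (a.val : ℤ) + (2 * (ℓ : ℤ) + 1) * (-s) := by ring
    have hmod : ((t - 2 * (ℓ : ℤ) * s + (a.val : ℤ)) - (t + s)) % (2 * (ℓ : ℤ) + 1)
        = (a.val : ℤ) := by
      rw [hd, Int.add_mul_emod_self_left, Int.emod_eq_of_lt ha0 ha1]
    have hdiv : ((t - 2 * (ℓ : ℤ) * s + (a.val : ℤ)) - (t + s)) / (2 * (ℓ : ℤ) + 1)
        = -s := by
      rw [hd, Int.add_mul_ediv_left _ _ (by positivity : (2 * (ℓ : ℤ) + 1) ≠ 0),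
        Int.ediv_eq_zero_of_lt ha0 ha1]
      ring
    simp only [Prod.mk.injEq, hmod, hdiv]
    refine ⟨Fin.ext ?_, by ring, by ring⟩
    simp
  right_inv := by
    rintro ⟨n, k⟩
    have h1 : 0 ≤ (n - k) % (2 * (ℓ : ℤ) + 1) := Int.emod_nonneg _ (by positivity)
    have hqr : (2 * (ℓ : ℤ) + 1) * ((n - k) / (2 * (ℓ : ℤ) + 1)) +
        (n - k) % (2 * (ℓ : ℤ) + 1) = n - k := Int.mul_ediv_add_emod _ _
    simp only [Prod.mk.injEq]
    constructor
    · rw [Int.toNat_of_nonneg h1]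
      linarith [hqr]
    · ring

set_option maxHeartbeats 1600000 in
/-- Lemma 3.3: theta decomposition of `-ϑ(z+1/2;τ) ϑ_{ℓ,c}(z;τ)`. -/
theorem theta_times_thetaMA (τ z : ℂ) (hτ : 0 < τ.im) (ℓ c : ℕ) (hℓ : 1 ≤ ℓ) (hc : c < ℓ) :
    -(jTheta (z + 1/2) τ * thetaMA ℓ c z τ) =
      ∑ a ∈ Finset.range (2 * ℓ + 1),
        thetaC (ℓ * (2 * ℓ + 1)) ((c : ℝ) - 2 * ℓ * a - ℓ) τ *
          thetaMA ((ℓ : ℝ) + 1/2) ((a : ℝ) + c + 1/2) z τ := by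
  have hl0 : (0 : ℝ) < (ℓ : ℝ) := by exact_mod_cast hℓ
  have hlC : (ℓ : ℂ) ≠ 0 := by
    simpa using (show ((ℓ : ℝ) : ℂ) ≠ 0 by exact_mod_cast hl0.ne')
  have h21 : 2 * (ℓ : ℂ) + 1 ≠ 0 := by
    have : ((2 * ℓ + 1 : ℕ) : ℂ) ≠ 0 := Nat.cast_ne_zero.mpr (by omega)
    push_cast at this
    exact this
  -- termwise summability
  have hL1 : Summable fun n : ℤ => ‖lTerm z τ n‖ := summable_norm_l z τ hτ
  have hL2 : Summable fun n : ℤ => ‖tmaTerm (ℓ : ℝ) (c : ℝ) z τ n‖ :=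
    summable_norm_tma _ _ hl0 z τ hτ
  have hf : Summable fun p : ℤ × ℤ => lTerm z τ p.1 * tmaTerm (ℓ : ℝ) (c : ℝ) z τ p.2 :=
    summable_mul_of_summable_norm hL1 hL2
  -- the RHS term functions
  set Φ : ℕ → ℤ × ℤ → ℂ := fun a p =>
    tmaTerm ((ℓ : ℝ) * (2 * (ℓ : ℝ) + 1)) ((c : ℝ) - 2 * (ℓ : ℝ) * (a : ℝ) - (ℓ : ℝ)) 0 τ p.1 *
      tmaTerm ((ℓ : ℝ) + 1/2) ((a : ℝ) + (c : ℝ) + 1/2) z τ p.2 with hΦdef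
  have hG : ∀ a : ℕ, Summable fun n : ℤ =>
      ‖tmaTerm ((ℓ : ℝ) * (2 * (ℓ : ℝ) + 1)) ((c : ℝ) - 2 * (ℓ : ℝ) * (a : ℝ) - (ℓ : ℝ)) 0 τ n‖ :=
    fun a => summable_norm_tma _ _ (by positivity) 0 τ hτ
  have hH : ∀ a : ℕ, Summable fun n : ℤ =>
      ‖tmaTerm ((ℓ : ℝ) + 1/2) ((a : ℝ) + (c : ℝ) + 1/2) z τ n‖ :=
    fun a => summable_norm_tma _ _ (by positivity) z τ hτ
  have hΦa : ∀ a : ℕ, Summable (Φ a) :=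
    fun a => summable_mul_of_summable_norm (hG a) (hH a)
  -- the key pointwise identity
  have key : ∀ q : Fin (2 * ℓ + 1) × ℤ × ℤ,
      lTerm z τ ((sigEquiv ℓ) q).1 * tmaTerm (ℓ : ℝ) (c : ℝ) z τ ((sigEquiv ℓ) q).2
        = Φ q.1.val q.2 := by
    rintro ⟨a, s, t⟩
    show lTerm z τ (t - 2 * (ℓ : ℤ) * s + (a.val : ℤ)) *
        tmaTerm (ℓ : ℝ) (c : ℝ) z τ (t + s) = _
    simp only [hΦdef, lTerm, tmaTerm]
    rw [← Complex.exp_add, ← Complex.exp_add]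
    congr 1
    push_cast
    rw [show (4 : ℂ) * ((ℓ : ℂ) + 1 / 2) = 2 * (2 * (ℓ : ℂ) + 1) by ring]
    field_simp
    ring
  have hΦ : Summable fun q : Fin (2 * ℓ + 1) × ℤ × ℤ => Φ q.1.val q.2 :=
    (((sigEquiv ℓ).summable_iff.mpr hf)).congr key
  calc
    -(jTheta (z + 1/2) τ * thetaMA ℓ c z τ)
        = (∑' n : ℤ, lTerm z τ n) * (∑' k : ℤ, tmaTerm (ℓ : ℝ) (c : ℝ) z τ k) := by
          rw [jTheta_shift, thetaMA_eq]; ring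
    _ = ∑' p : ℤ × ℤ, lTerm z τ p.1 * tmaTerm (ℓ : ℝ) (c : ℝ) z τ p.2 :=
          tsum_mul_tsum_of_summable_norm hL1 hL2
    _ = ∑' q : Fin (2 * ℓ + 1) × ℤ × ℤ,
          lTerm z τ ((sigEquiv ℓ) q).1 * tmaTerm (ℓ : ℝ) (c : ℝ) z τ ((sigEquiv ℓ) q).2 :=
          ((sigEquiv ℓ).tsum_eq _).symm
    _ = ∑' q : Fin (2 * ℓ + 1) × ℤ × ℤ, Φ q.1.val q.2 := tsum_congr key
    _ = ∑' (a : Fin (2 * ℓ + 1)), ∑' (p : ℤ × ℤ), Φ a.val p :=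
          Summable.tsum_prod' hΦ fun a => hΦa a.val
    _ = ∑ a : Fin (2 * ℓ + 1), ∑' (p : ℤ × ℤ), Φ a.val p := tsum_fintype _
    _ = ∑ a ∈ Finset.range (2 * ℓ + 1), ∑' (p : ℤ × ℤ), Φ a p :=
          Fin.sum_univ_eq_sum_range (fun a => ∑' (p : ℤ × ℤ), Φ a p) (2 * ℓ + 1)
    _ = ∑ a ∈ Finset.range (2 * ℓ + 1),
          thetaC (ℓ * (2 * ℓ + 1)) ((c : ℝ) - 2 * ℓ * a - ℓ) τ *
            thetaMA ((ℓ : ℝ) + 1/2) ((a : ℝ) + c + 1/2) z τ := by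
          refine Finset.sum_congr rfl fun a _ => ?_
          rw [thetaC, thetaMA_eq, thetaMA_eq,
            tsum_mul_tsum_of_summable_norm (hG a) (hH a)]
end

section
/- For integers ℓ ≥ 1, 0 ≤ c < ℓ, and ε ∈ {0,1}: ϑ_{1,ε}(z;τ) ϑ_{ℓ,c}(z;τ) = Σ_{a mod ℓ+1} θ_{ℓ(ℓ+1), (2a+ε)ℓ - c}(τ) ϑ_{ℓ+1, 2a+c+ε}(z;τ). -/
open Complex

/-- The general term of `thetaMA`. -/
noncomputable def thTerm (m a : ℝ) (z τ : ℂ) (n : ℤ) : ℂ :=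
  Complex.exp (2 * (Real.pi : ℂ) * I * τ * ((2 * m * n + a) ^ 2 / (4 * m)) +
    2 * (Real.pi : ℂ) * I * z * (2 * m * n + a))

lemma thetaMA_eq_tsum (m a : ℝ) (z τ : ℂ) : thetaMA m a z τ = ∑' n : ℤ, thTerm m a z τ n := rfl

lemma thTerm_eq_jacobi (m a : ℝ) (hm : m ≠ 0) (z τ : ℂ) (n : ℤ) :
    thTerm m a z τ n = Complex.exp ((Real.pi : ℂ) * I * τ * a ^ 2 / (2 * m) +
      2 * (Real.pi : ℂ) * I * z * a) *
      jacobiTheta₂_term n ((a : ℂ) * τ + 2 * m * z) (2 * (m : ℂ) * τ) := by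
  unfold thTerm jacobiTheta₂_term
  rw [← Complex.exp_add]
  congr 1
  have hm' : (m : ℂ) ≠ 0 := Complex.ofReal_ne_zero.mpr hm
  field_simp
  ring

lemma summable_norm_thTerm (m a : ℝ) (hm : 0 < m) (z τ : ℂ) (hτ : 0 < τ.im) :
    Summable fun n : ℤ => ‖thTerm m a z τ n‖ := by
  have hs : Summable (jacobiTheta₂_term · ((a : ℂ) * τ + 2 * m * z) (2 * (m : ℂ) * τ)) := by
    rw [summable_jacobiTheta₂_term_iff]
    have : (2 * (m : ℂ) * τ).im = 2 * m * τ.im := by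
      simp [Complex.mul_im]
    rw [this]
    positivity
  have hs' := (summable_norm_iff.mpr hs).mul_left
    ‖Complex.exp ((Real.pi : ℂ) * I * τ * a ^ 2 / (2 * m) + 2 * (Real.pi : ℂ) * I * z * a)‖
  refine hs'.congr fun n => ?_
  rw [thTerm_eq_jacobi m a hm.ne' z τ n, norm_mul]

lemma summable_thTerm (m a : ℝ) (hm : 0 < m) (z τ : ℂ) (hτ : 0 < τ.im) :
    Summable fun n : ℤ => thTerm m a z τ n :=
  (summable_norm_thTerm m a hm z τ hτ).of_norm

/-- The key reindexing equivalence. -/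
def sigmaEquiv (ℓ : ℕ) : (Fin (ℓ + 1) × ℤ × ℤ) ≃ ℤ × ℤ where
  toFun p := ((p.1 : ℤ) + ℓ * p.2.1 + p.2.2, p.2.2 - p.2.1)
  invFun q := (⟨((q.1 - q.2) % ((ℓ : ℤ) + 1)).toNat, by
      have h0 : (0 : ℤ) < (ℓ : ℤ) + 1 := by positivity
      have h1 := Int.emod_nonneg (q.1 - q.2) h0.ne'
      have h2 := Int.emod_lt_of_pos (q.1 - q.2) h0
      omega⟩,
    (q.1 - q.2) / ((ℓ : ℤ) + 1), (q.1 - q.2) / ((ℓ : ℤ) + 1) + q.2)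
  left_inv := by
    rintro ⟨a, r, s⟩
    have h0 : (0 : ℤ) < (ℓ : ℤ) + 1 := by positivity
    have hd : (a : ℤ) + ℓ * r + s - (s - r) = (a : ℤ) + ((ℓ : ℤ) + 1) * r := by ring
    have ha : ((a : ℤ) + ((ℓ : ℤ) + 1) * r) % ((ℓ : ℤ) + 1) = (a : ℤ) := by
      rw [Int.add_mul_emod_self_left]
      refine Int.emod_eq_of_lt (by positivity) ?_
      have := a.isLt
      omega
    have hr : ((a : ℤ) + ((ℓ : ℤ) + 1) * r) / ((ℓ : ℤ) + 1) = r := by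
      rw [Int.add_mul_ediv_left _ _ h0.ne', Int.ediv_eq_zero_of_lt (by positivity)
        (by have := a.isLt; omega), zero_add]
    simp only [hd, ha, hr]
    refine Prod.ext ?_ (Prod.ext rfl (by ring))
    ext
    simp
  right_inv := by
    rintro ⟨n, k⟩
    have h0 : (0 : ℤ) < (ℓ : ℤ) + 1 := by positivity
    have h1 := Int.emod_nonneg (n - k) h0.ne'
    have h2 := Int.emod_add_mul_ediv (n - k) ((ℓ : ℤ) + 1)
    refine Prod.ext ?_ (by simp)
    simp only
    have h3 : (((( n - k) % ((ℓ : ℤ) + 1)).toNat : ℤ)) = (n - k) % ((ℓ : ℤ) + 1) :=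
      Int.toNat_of_nonneg h1
    have h4 : (ℓ : ℤ) * ((n - k) / ((ℓ : ℤ) + 1)) + ((n - k) / ((ℓ : ℤ) + 1)) =
        ((ℓ : ℤ) + 1) * ((n - k) / ((ℓ : ℤ) + 1)) := by ring
    omega

/-- The key pointwise identity. -/
lemma key_identity (τ z : ℂ) (ℓ : ℕ) (hℓ : 1 ≤ ℓ) (c ε : ℕ) (a : ℕ) (r s : ℤ) :
    thTerm 1 ε z τ ((a : ℤ) + ℓ * r + s) * thTerm ℓ c z τ (s - r) =
    thTerm ((ℓ : ℝ) * ((ℓ : ℝ) + 1)) ((2 * (a : ℝ) + ε) * ℓ - c) 0 τ r *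
      thTerm ((ℓ : ℝ) + 1) (2 * (a : ℝ) + c + ε) z τ s := by
  unfold thTerm
  rw [← Complex.exp_add, ← Complex.exp_add]
  congr 1
  have hL : (ℓ : ℂ) ≠ 0 := Nat.cast_ne_zero.mpr (by omega)
  have hL1 : (ℓ : ℂ) + 1 ≠ 0 := by
    have : ((ℓ + 1 : ℕ) : ℂ) ≠ 0 := Nat.cast_ne_zero.mpr (by omega)
    push_cast at this
    exact this
  push_cast
  field_simp
  ring

/-- Lemma 3.4: theta decomposition of `ϑ_{1,ε}(z;τ) ϑ_{ℓ,c}(z;τ)`. -/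
theorem thetaMA_one_times_thetaMA (τ z : ℂ) (hτ : 0 < τ.im) (ℓ c ε : ℕ)
    (hℓ : 1 ≤ ℓ) (hc : c < ℓ) (hε : ε = 0 ∨ ε = 1) :
    thetaMA 1 ε z τ * thetaMA ℓ c z τ =
      ∑ a ∈ Finset.range (ℓ + 1),
        thetaC (ℓ * (ℓ + 1)) ((2 * a + ε) * ℓ - (c : ℝ)) τ *
          thetaMA (ℓ + 1) (2 * (a : ℝ) + c + ε) z τ := by
  have hℓR : (0 : ℝ) < ℓ := by exact_mod_cast hℓ
  have h1 := summable_norm_thTerm 1 ε one_pos z τ hτ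
  have h2 := summable_norm_thTerm ℓ c hℓR z τ hτ
  have hF : Summable fun p : ℤ × ℤ => thTerm 1 ε z τ p.1 * thTerm ℓ c z τ p.2 :=
    summable_mul_of_summable_norm h1 h2
  rw [thetaMA_eq_tsum, thetaMA_eq_tsum, tsum_mul_tsum_of_summable_norm h1 h2]
  have he := ((sigmaEquiv ℓ).tsum_eq
    (fun p : ℤ × ℤ => thTerm 1 ε z τ p.1 * thTerm ℓ c z τ p.2)).symm
  rw [he]
  have hG : Summable fun p : Fin (ℓ + 1) × ℤ × ℤ =>
      thTerm 1 ε z τ ((sigmaEquiv ℓ p).1) * thTerm ℓ c z τ ((sigmaEquiv ℓ p).2) :=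
    (Equiv.summable_iff (sigmaEquiv ℓ)).mpr hF
  rw [Summable.tsum_prod' hG (fun a => hG.comp_injective (Prod.mk_right_injective a)), tsum_fintype]
  rw [← Fin.sum_univ_eq_sum_range (fun a =>
    thetaC (ℓ * (ℓ + 1)) ((2 * a + ε) * ℓ - (c : ℝ)) τ *
      thetaMA (ℓ + 1) (2 * (a : ℝ) + c + ε) z τ)]
  refine Finset.sum_congr rfl fun a _ => ?_
  have hstep : ∀ q : ℤ × ℤ,
      thTerm 1 ε z τ ((sigmaEquiv ℓ (a, q)).1) * thTerm ℓ c z τ ((sigmaEquiv ℓ (a, q)).2) =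
      thTerm ((ℓ : ℝ) * ((ℓ : ℝ) + 1)) ((2 * (a : ℝ) + ε) * ℓ - c) 0 τ q.1 *
        thTerm ((ℓ : ℝ) + 1) (2 * (a : ℝ) + c + ε) z τ q.2 := by
    rintro ⟨r, s⟩
    exact key_identity τ z ℓ hℓ c ε a r s
  calc ∑' q : ℤ × ℤ,
      thTerm 1 ε z τ ((sigmaEquiv ℓ (a, q)).1) * thTerm ℓ c z τ ((sigmaEquiv ℓ (a, q)).2)
      = ∑' q : ℤ × ℤ, thTerm ((ℓ : ℝ) * ((ℓ : ℝ) + 1)) ((2 * (a : ℝ) + ε) * ℓ - c) 0 τ q.1 *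
          thTerm ((ℓ : ℝ) + 1) (2 * (a : ℝ) + c + ε) z τ q.2 := tsum_congr hstep
    _ = (∑' r : ℤ, thTerm ((ℓ : ℝ) * ((ℓ : ℝ) + 1)) ((2 * (a : ℝ) + ε) * ℓ - c) 0 τ r) *
          ∑' s : ℤ, thTerm ((ℓ : ℝ) + 1) (2 * (a : ℝ) + c + ε) z τ s :=
        (tsum_mul_tsum_of_summable_norm
          (summable_norm_thTerm _ _ (by positivity) 0 τ hτ)
          (summable_norm_thTerm _ _ (by positivity) z τ hτ)).symm
    _ = _ := by
        rw [← thetaMA_eq_tsum, ← thetaMA_eq_tsum]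
        rfl
end

section
/- Theta relation: θ_{2,2}(τ) θ_{6,0}(τ) + θ_{2,0}(τ) θ_{6,6}(τ) = 2 θ_{2,1}(τ) θ_{6,3}(τ). -/
open Complex

/-! ### Auxiliary definitions and lemmas -/

noncomputable def Fq (τ : ℂ) (u v : ℤ) : ℂ :=
  Complex.exp ((Real.pi : ℂ) * I * τ / 4 * ((u : ℂ) ^ 2 + 3 * (v : ℂ) ^ 2))

noncomputable def Gone (τ : ℂ) (a : ℤ) (n : ℤ) : ℂ :=
  Complex.exp ((Real.pi : ℂ) * I * τ / 4 * ((4 * n + a : ℤ) : ℂ) ^ 2)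

noncomputable def Gthree (τ : ℂ) (b : ℤ) (n : ℤ) : ℂ :=
  Complex.exp ((Real.pi : ℂ) * I * τ / 4 * (3 * ((4 * n + b : ℤ) : ℂ) ^ 2))

lemma summable_gauss {c : ℝ} (hc : 0 < c) (w b : ℝ) (hw : 1 ≤ w) :
    Summable fun n : ℤ => Real.exp (-(c * (w * n + b) ^ 2)) := by
  have hπ : (0:ℝ) < Real.pi := Real.pi_pos
  have h := summable_pow_mul_jacobiTheta₂_term_bound (c * w * |b| / Real.pi)
      (T := c / Real.pi) (by positivity) 0
  simp only [pow_zero, one_mul] at h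
  refine Summable.of_nonneg_of_le (fun n => (Real.exp_pos _).le) (fun n => ?_) h
  rw [Real.exp_le_exp]
  push_cast
  have key : -Real.pi * (c / Real.pi * (n:ℝ) ^ 2 - 2 * (c * w * |b| / Real.pi) * |(n:ℝ)|)
      = -(c * (n:ℝ) ^ 2) + 2 * c * w * |b| * |(n:ℝ)| := by
    field_simp
    ring
  rw [key]
  have h1 : 0 ≤ (w - 1) * (w + 1) * (n:ℝ)^2 :=
    mul_nonneg (mul_nonneg (by linarith) (by linarith)) (sq_nonneg _)
  have h2 : -(b * (n:ℝ)) ≤ |b| * |(n:ℝ)| := by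
    rw [← abs_mul]; exact neg_le_abs _
  have h3 : 0 ≤ c * ((w - 1) * (w + 1) * (n:ℝ)^2) := mul_nonneg hc.le h1
  have h4 : 0 ≤ c * w * (|b| * |(n:ℝ)| + b * (n:ℝ)) :=
    mul_nonneg (mul_nonneg hc.le (by linarith)) (by linarith [h2])
  have h5 : 0 ≤ c * b^2 := mul_nonneg hc.le (sq_nonneg b)
  nlinarith [h3, h4, h5]

lemma norm_exp_aux (τ : ℂ) (r : ℝ) :
    ‖Complex.exp ((Real.pi : ℂ) * I * τ / 4 * (r : ℂ))‖
      = Real.exp (-(Real.pi * τ.im / 4 * r)) := by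
  rw [Complex.norm_exp]
  congr 1
  have h : (Real.pi : ℂ) * I * τ / 4 * (r : ℂ) = ((Real.pi * r / 4 : ℝ) : ℂ) * (I * τ) := by
    push_cast; ring
  rw [h, Complex.re_ofReal_mul]
  simp [Complex.mul_re]
  ring

lemma norm_Fq (τ : ℂ) (u v : ℤ) :
    ‖Fq τ u v‖ = Real.exp (-(Real.pi * τ.im / 4 * (u:ℝ) ^ 2))
      * Real.exp (-(Real.pi * τ.im / 4 * (3 * (v:ℝ) ^ 2))) := by
  rw [← Real.exp_add]
  have h : ((u:ℂ) ^ 2 + 3 * (v:ℂ) ^ 2) = (((u:ℝ) ^ 2 + 3 * (v:ℝ) ^ 2 : ℝ) : ℂ) := by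
    push_cast; ring
  rw [Fq, h, norm_exp_aux]
  congr 1
  ring

lemma summable_norm_Fq {τ : ℂ} (hτ : 0 < τ.im) :
    Summable fun p : ℤ × ℤ => ‖Fq τ p.1 p.2‖ := by
  have hc : (0:ℝ) < Real.pi * τ.im / 4 := by positivity
  have h1 : Summable fun n : ℤ => Real.exp (-(Real.pi * τ.im / 4 * (n:ℝ) ^ 2)) := by
    refine (summable_gauss hc 1 0 le_rfl).congr fun n => ?_
    congr 1; ring
  have h3 : Summable fun n : ℤ => Real.exp (-(Real.pi * τ.im / 4 * (3 * (n:ℝ) ^ 2))) := by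
    refine (summable_gauss (show (0:ℝ) < 3 * (Real.pi * τ.im / 4) by positivity) 1 0 le_rfl).congr
      fun n => ?_
    congr 1; ring
  have := h1.mul_of_nonneg h3 (fun n => (Real.exp_pos _).le) (fun n => (Real.exp_pos _).le)
  exact this.congr fun p => (norm_Fq τ p.1 p.2).symm

lemma summable_Fq_comp {τ : ℂ} (hτ : 0 < τ.im) (A : ℤ × ℤ → ℤ × ℤ)
    (hA : Function.Injective A) :
    Summable fun p : ℤ × ℤ => Fq τ (A p).1 (A p).2 := by
  have h := (summable_norm_Fq hτ).comp_injective hA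
  refine Summable.of_norm ?_
  simpa [Function.comp_def] using h

lemma tsum_pair_eq {f : ℤ × ℤ → ℂ} {u₁ u₂ v₁ v₂ : ℤ × ℤ → ℤ × ℤ}
    (hu₁ : Function.Injective u₁) (hu₂ : Function.Injective u₂)
    (hv₁ : Function.Injective v₁) (hv₂ : Function.Injective v₂)
    (hdu : Disjoint (Set.range u₁) (Set.range u₂))
    (hdv : Disjoint (Set.range v₁) (Set.range v₂))
    (hsame : Set.range u₁ ∪ Set.range u₂ = Set.range v₁ ∪ Set.range v₂)
    (hs₁ : Summable fun p => f (u₁ p)) (hs₂ : Summable fun p => f (u₂ p))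
    (hs₃ : Summable fun p => f (v₁ p)) (hs₄ : Summable fun p => f (v₂ p)) :
    (∑' p, f (u₁ p)) + (∑' p, f (u₂ p)) = (∑' p, f (v₁ p)) + (∑' p, f (v₂ p)) := by
  have h1 : HasSum (f ∘ (↑) : (Set.range u₁ ∪ Set.range u₂ : Set (ℤ × ℤ)) → ℂ)
      ((∑' p, f (u₁ p)) + (∑' p, f (u₂ p))) :=
    HasSum.add_disjoint hdu (hu₁.hasSum_range_iff.2 hs₁.hasSum)
      (hu₂.hasSum_range_iff.2 hs₂.hasSum)
  have h2 : HasSum (f ∘ (↑) : (Set.range v₁ ∪ Set.range v₂ : Set (ℤ × ℤ)) → ℂ)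
      ((∑' p, f (v₁ p)) + (∑' p, f (v₂ p))) :=
    HasSum.add_disjoint hdv (hv₁.hasSum_range_iff.2 hs₃.hasSum)
      (hv₂.hasSum_range_iff.2 hs₄.hasSum)
  rw [hsame] at h1
  exact h1.unique h2

lemma theta2_sum (τ : ℂ) (a : ℤ) : thetaC 2 (a : ℝ) τ = ∑' n : ℤ, Gone τ a n := by
  unfold thetaC thetaMA Gone
  refine tsum_congr fun n => ?_
  congr 1
  push_cast
  ring

lemma theta6_sum (τ : ℂ) (b : ℤ) : thetaC 6 ((3 * b : ℤ) : ℝ) τ = ∑' n : ℤ, Gthree τ b n := by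
  unfold thetaC thetaMA Gthree
  refine tsum_congr fun n => ?_
  congr 1
  push_cast
  ring

lemma theta_prod (τ : ℂ) (hτ : 0 < τ.im) (a b : ℤ) :
    thetaC 2 (a : ℝ) τ * thetaC 6 ((3 * b : ℤ) : ℝ) τ
      = ∑' p : ℤ × ℤ, Fq τ (4 * p.1 + a) (4 * p.2 + b) := by
  have hc : (0:ℝ) < Real.pi * τ.im / 4 := by positivity
  have hna : Summable fun n : ℤ => ‖Gone τ a n‖ := by
    refine (summable_gauss hc 4 (a:ℝ) (by norm_num)).congr fun n => ?_
    have h : ((4 * n + a : ℤ) : ℂ) ^ 2 = ((((4:ℝ) * n + a) ^ 2 : ℝ) : ℂ) := by push_cast; ring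
    rw [Gone, h, norm_exp_aux]
  have hnb : Summable fun n : ℤ => ‖Gthree τ b n‖ := by
    refine (summable_gauss (show (0:ℝ) < 3 * (Real.pi * τ.im / 4) by positivity) 4 (b:ℝ)
      (by norm_num)).congr fun n => ?_
    have h : (3 : ℂ) * ((4 * n + b : ℤ) : ℂ) ^ 2 = (((3:ℝ) * ((4:ℝ) * n + b) ^ 2 : ℝ) : ℂ) := by
      push_cast; ring
    rw [Gthree, h, norm_exp_aux]
    congr 1
    ring
  rw [theta2_sum, theta6_sum, tsum_mul_tsum_of_summable_norm hna hnb]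
  refine tsum_congr fun p => ?_
  rw [Gone, Gthree, Fq, ← Complex.exp_add]
  congr 1
  push_cast
  ring

def shearA : ℤ × ℤ ≃ ℤ × ℤ where
  toFun p := (p.1 + p.2, p.1)
  invFun q := (q.2, q.1 - q.2)
  left_inv p := by simp [Prod.ext_iff]
  right_inv q := by simp [Prod.ext_iff]

def shearB : ℤ × ℤ ≃ ℤ × ℤ where
  toFun p := (-p.1 - p.2 - 1, -p.1 - 1)
  invFun q := (-q.2 - 1, q.2 - q.1)
  left_inv p := by rcases p with ⟨x, y⟩; simp only [Prod.mk.injEq]; omega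
  right_inv q := by rcases q with ⟨x, y⟩; simp only [Prod.mk.injEq]; omega

/-- Theta relation (3.12). -/
theorem theta_relation_A (τ : ℂ) (hτ : 0 < τ.im) :
    thetaC 2 2 τ * thetaC 6 0 τ + thetaC 2 0 τ * thetaC 6 6 τ =
      2 * thetaC 2 1 τ * thetaC 6 3 τ := by
  have e1 : thetaC 2 2 τ * thetaC 6 0 τ = ∑' p : ℤ × ℤ, Fq τ (4 * p.1 + 2) (4 * p.2) := by
    simpa using theta_prod τ hτ 2 0
  have e2 : thetaC 2 0 τ * thetaC 6 6 τ = ∑' p : ℤ × ℤ, Fq τ (4 * p.1) (4 * p.2 + 2) := by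
    simpa using theta_prod τ hτ 0 2
  have e3 : thetaC 2 1 τ * thetaC 6 3 τ = ∑' p : ℤ × ℤ, Fq τ (4 * p.1 + 1) (4 * p.2 + 1) := by
    simpa using theta_prod τ hτ 1 1
  -- reindex the right-hand sum, twice
  have R1 : (∑' p : ℤ × ℤ, Fq τ (4 * p.1 + 1) (4 * p.2 + 1))
      = ∑' p : ℤ × ℤ, Fq τ (8 * p.1 + 2 * p.2 + 2) (2 * p.2) := by
    rw [← Equiv.tsum_eq shearA (fun q : ℤ × ℤ => Fq τ (4 * q.1 + 1) (4 * q.2 + 1))]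
    refine tsum_congr fun p => ?_
    simp only [shearA, Equiv.coe_fn_mk]
    unfold Fq
    congr 1
    push_cast
    ring
  have R2 : (∑' p : ℤ × ℤ, Fq τ (4 * p.1 + 1) (4 * p.2 + 1))
      = ∑' p : ℤ × ℤ, Fq τ (8 * p.1 + 2 * p.2 + 6) (2 * p.2) := by
    rw [← Equiv.tsum_eq shearB (fun q : ℤ × ℤ => Fq τ (4 * q.1 + 1) (4 * q.2 + 1))]
    refine tsum_congr fun p => ?_
    simp only [shearB, Equiv.coe_fn_mk]
    unfold Fq
    congr 1
    push_cast
    ring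
  -- the main rearrangement
  have hu₁ : Function.Injective (fun p : ℤ × ℤ => ((8 * p.1 + 2 * p.2 + 2, 2 * p.2) : ℤ × ℤ)) := by
    intro p q h
    rw [Prod.ext_iff] at h ⊢
    simp only at h ⊢
    omega
  have hu₂ : Function.Injective (fun p : ℤ × ℤ => ((8 * p.1 + 2 * p.2 + 6, 2 * p.2) : ℤ × ℤ)) := by
    intro p q h
    rw [Prod.ext_iff] at h ⊢
    simp only at h ⊢
    omega
  have hv₁ : Function.Injective (fun p : ℤ × ℤ => ((4 * p.1 + 2, 4 * p.2) : ℤ × ℤ)) := by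
    intro p q h
    rw [Prod.ext_iff] at h ⊢
    simp only at h ⊢
    omega
  have hv₂ : Function.Injective (fun p : ℤ × ℤ => ((4 * p.1, 4 * p.2 + 2) : ℤ × ℤ)) := by
    intro p q h
    rw [Prod.ext_iff] at h ⊢
    simp only at h ⊢
    omega
  have hdu : Disjoint (Set.range (fun p : ℤ × ℤ => ((8 * p.1 + 2 * p.2 + 2, 2 * p.2) : ℤ × ℤ)))
      (Set.range (fun p : ℤ × ℤ => ((8 * p.1 + 2 * p.2 + 6, 2 * p.2) : ℤ × ℤ))) := by
    rw [Set.disjoint_left]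
    rintro x ⟨p, rfl⟩ ⟨q, hq⟩
    rw [Prod.ext_iff] at hq
    simp only at hq
    omega
  have hdv : Disjoint (Set.range (fun p : ℤ × ℤ => ((4 * p.1 + 2, 4 * p.2) : ℤ × ℤ)))
      (Set.range (fun p : ℤ × ℤ => ((4 * p.1, 4 * p.2 + 2) : ℤ × ℤ))) := by
    rw [Set.disjoint_left]
    rintro x ⟨p, rfl⟩ ⟨q, hq⟩
    rw [Prod.ext_iff] at hq
    simp only at hq
    omega
  have hsame : Set.range (fun p : ℤ × ℤ => ((8 * p.1 + 2 * p.2 + 2, 2 * p.2) : ℤ × ℤ))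
        ∪ Set.range (fun p : ℤ × ℤ => ((8 * p.1 + 2 * p.2 + 6, 2 * p.2) : ℤ × ℤ))
      = Set.range (fun p : ℤ × ℤ => ((4 * p.1 + 2, 4 * p.2) : ℤ × ℤ))
        ∪ Set.range (fun p : ℤ × ℤ => ((4 * p.1, 4 * p.2 + 2) : ℤ × ℤ)) := by
    ext x
    simp only [Set.mem_union, Set.mem_range, Prod.ext_iff]
    constructor
    · rintro (⟨⟨n, k⟩, h1, h2⟩ | ⟨⟨n, k⟩, h1, h2⟩) <;>
        rcases Int.even_or_odd k with ⟨t, ht⟩ | ⟨t, ht⟩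
      · exact Or.inl ⟨(2 * n + t, t), by constructor <;> simp only at h1 h2 ⊢ <;> omega⟩
      · exact Or.inr ⟨(2 * n + t + 1, t), by constructor <;> simp only at h1 h2 ⊢ <;> omega⟩
      · exact Or.inl ⟨(2 * n + t + 1, t), by constructor <;> simp only at h1 h2 ⊢ <;> omega⟩
      · exact Or.inr ⟨(2 * n + t + 2, t), by constructor <;> simp only at h1 h2 ⊢ <;> omega⟩
    · rintro (⟨⟨m, n⟩, h1, h2⟩ | ⟨⟨m, n⟩, h1, h2⟩) <;>
        rcases Int.even_or_odd (m - n) with ⟨s, hs⟩ | ⟨s, hs⟩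
      · exact Or.inl ⟨(s, 2 * n), by constructor <;> simp only at h1 h2 ⊢ <;> omega⟩
      · exact Or.inr ⟨(s, 2 * n), by constructor <;> simp only at h1 h2 ⊢ <;> omega⟩
      · exact Or.inr ⟨(s - 1, 2 * n + 1), by constructor <;> simp only at h1 h2 ⊢ <;> omega⟩
      · exact Or.inl ⟨(s, 2 * n + 1), by constructor <;> simp only at h1 h2 ⊢ <;> omega⟩
  have hs₁ := summable_Fq_comp hτ _ hu₁
  have hs₂ := summable_Fq_comp hτ _ hu₂
  have hs₃ := summable_Fq_comp hτ _ hv₁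
  have hs₄ := summable_Fq_comp hτ _ hv₂
  have key := tsum_pair_eq (f := fun q : ℤ × ℤ => Fq τ q.1 q.2) hu₁ hu₂ hv₁ hv₂ hdu hdv hsame
    hs₁ hs₂ hs₃ hs₄
  simp only at key
  rw [e1, e2, show (2 : ℂ) * thetaC 2 1 τ * thetaC 6 3 τ
      = 2 * (thetaC 2 1 τ * thetaC 6 3 τ) by ring, e3, two_mul]
  calc (∑' p : ℤ × ℤ, Fq τ (4 * p.1 + 2) (4 * p.2))
        + ∑' p : ℤ × ℤ, Fq τ (4 * p.1) (4 * p.2 + 2)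
      = (∑' p : ℤ × ℤ, Fq τ (8 * p.1 + 2 * p.2 + 2) (2 * p.2))
        + ∑' p : ℤ × ℤ, Fq τ (8 * p.1 + 2 * p.2 + 6) (2 * p.2) := key.symm
    _ = (∑' p : ℤ × ℤ, Fq τ (4 * p.1 + 1) (4 * p.2 + 1))
        + ∑' p : ℤ × ℤ, Fq τ (4 * p.1 + 1) (4 * p.2 + 1) := by rw [← R1, ← R2]
end

section
/- Theta relation: θ_{2,2}(τ) θ_{6,4}(τ) + θ_{2,0}(τ) θ_{6,2}(τ) = θ_{2,1}(τ)(θ_{6,1}(τ) + θ_{6,5}(τ)). -/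
open Complex

/-! ### Auxiliary machinery -/

section Aux

lemma hasSum_sumType' {α β : Type*} {f : α ⊕ β → ℂ} {a b : ℂ}
    (ha : HasSum (fun x => f (Sum.inl x)) a) (hb : HasSum (fun x => f (Sum.inr x)) b) :
    HasSum f (a + b) := by
  have h1 : HasSum (f ∘ ((↑) : Set.range (Sum.inl : α → α ⊕ β) → α ⊕ β)) a := by
    rw [← (Equiv.ofInjective _ Sum.inl_injective).hasSum_iff]
    simpa [Function.comp_def] using ha
  have h2 : HasSum (f ∘ ((↑) : Set.range (Sum.inr : β → α ⊕ β) → α ⊕ β)) b := by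
    rw [← (Equiv.ofInjective _ Sum.inr_injective).hasSum_iff]
    simpa [Function.comp_def] using hb
  exact h1.add_isCompl Set.isCompl_range_inl_range_inr h2

lemma tsum_sumType' {α β : Type*} {f : α ⊕ β → ℂ} (h : Summable f) :
    ∑' x, f x = (∑' a, f (Sum.inl a)) + ∑' b, f (Sum.inr b) :=
  (hasSum_sumType' ((h.comp_injective Sum.inl_injective).hasSum)
    ((h.comp_injective Sum.inr_injective).hasSum)).tsum_eq

set_option linter.unnecessarySeqFocus false in
/-- Splitting `ℤ × ℤ` according to the parity of `n - k`. -/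
def eL : (ℤ × ℤ) ⊕ (ℤ × ℤ) ≃ ℤ × ℤ where
  toFun x := Sum.elim (fun p => (p.2 + 2 * p.1, p.2)) (fun p => (p.2 + 2 * p.1 + 1, p.2)) x
  invFun p := if (p.1 - p.2) % 2 = 0 then Sum.inl ((p.1 - p.2) / 2, p.2)
    else Sum.inr ((p.1 - p.2 - 1) / 2, p.2)
  left_inv := by
    rintro (⟨m, k⟩ | ⟨m, k⟩) <;> simp <;> split_ifs <;> (try simp_all) <;> omega
  right_inv := by
    rintro ⟨n, k⟩ <;> simp <;> split_ifs <;> (try simp_all) <;> omega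

set_option linter.unnecessarySeqFocus false in
/-- Splitting `ℤ × ℤ` according to the parity of `n + k`, first version. -/
def eR1 : (ℤ × ℤ) ⊕ (ℤ × ℤ) ≃ ℤ × ℤ where
  toFun x := Sum.elim (fun p => (2 * p.2 + p.1, -p.1)) (fun p => (-2 * p.2 - p.1 - 1, p.1)) x
  invFun p := if (p.1 + p.2) % 2 = 0 then Sum.inl (-p.2, (p.1 + p.2) / 2)
    else Sum.inr (p.2, (-p.1 - p.2 - 1) / 2)
  left_inv := by
    rintro (⟨m, k⟩ | ⟨m, k⟩) <;> simp <;> split_ifs <;> (try simp_all) <;> omega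
  right_inv := by
    rintro ⟨n, k⟩ <;> simp <;> split_ifs <;> (try simp_all) <;> omega

set_option linter.unnecessarySeqFocus false in
/-- Splitting `ℤ × ℤ` according to the parity of `n + k`, second version. -/
def eR2 : (ℤ × ℤ) ⊕ (ℤ × ℤ) ≃ ℤ × ℤ where
  toFun x := Sum.elim (fun p => (2 * p.2 + p.1 + 1, -p.1 - 1)) (fun p => (-2 * p.2 - p.1 - 1, p.1)) x
  invFun p := if (p.1 + p.2) % 2 = 0 then Sum.inl (-p.2 - 1, (p.1 + p.2) / 2)
    else Sum.inr (p.2, (-p.1 - p.2 - 1) / 2)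
  left_inv := by
    rintro (⟨m, k⟩ | ⟨m, k⟩) <;> simp <;> split_ifs <;> (try simp_all) <;> omega
  right_inv := by
    rintro ⟨n, k⟩ <;> simp <;> split_ifs <;> (try simp_all) <;> omega

lemma splitSum (G : ℤ × ℤ → ℂ) (hG : Summable G) (e : (ℤ × ℤ) ⊕ (ℤ × ℤ) ≃ ℤ × ℤ) :
    ∑' p, G p = (∑' p : ℤ × ℤ, G (e (Sum.inl p))) + ∑' p : ℤ × ℤ, G (e (Sum.inr p)) := by
  rw [← Equiv.tsum_eq e G]
  exact tsum_sumType' (e.summable_iff.mpr hG)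

/-- The generic term of the product `θ_{2,a} θ_{6,b}`. -/
noncomputable def Ftheta (a b : ℝ) (τ : ℂ) (p : ℤ × ℤ) : ℂ :=
  cexp (2 * (Real.pi : ℂ) * I * τ * ((4 * p.1 + a) ^ 2 / 8 + (12 * p.2 + b) ^ 2 / 24))

lemma gsum (m a : ℝ) (hm : 0 < m) {τ : ℂ} (hτ : 0 < τ.im) :
    Summable fun n : ℤ =>
      ‖cexp (2 * (Real.pi : ℂ) * I * τ *
        ((2 * (m : ℂ) * (n : ℤ) + (a : ℂ)) ^ 2 / (4 * (m : ℂ))))‖ := by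
  have hm' : (m : ℂ) ≠ 0 := by exact_mod_cast hm.ne'
  have h1 : ∀ n : ℤ,
      cexp (2 * (Real.pi : ℂ) * I * τ * ((2 * (m : ℂ) * (n : ℤ) + (a : ℂ)) ^ 2 / (4 * (m : ℂ))))
        = cexp (2 * (Real.pi : ℂ) * I * τ * ((a : ℂ) ^ 2 / (4 * (m : ℂ))))
          * jacobiTheta₂_term n ((a : ℂ) * τ) (2 * (m : ℂ) * τ) := by
    intro n
    rw [jacobiTheta₂_term, ← Complex.exp_add]
    congr 1
    field_simp
    ring
  simp only [h1, norm_mul]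
  apply Summable.mul_left
  rw [summable_norm_iff]
  apply (summable_jacobiTheta₂_term_iff _ _).mpr
  have h2 : (2 * (m : ℂ) * τ).im = 2 * m * τ.im := by
    simp [Complex.mul_im]
  rw [h2]
  positivity

lemma prodRep {τ : ℂ} (hτ : 0 < τ.im) (a b : ℝ) :
    thetaC 2 a τ * thetaC 6 b τ = ∑' p : ℤ × ℤ, Ftheta a b τ p := by
  have h2 := gsum 2 a two_pos hτ
  have h6 := gsum 6 b (by norm_num) hτ
  unfold thetaC thetaMA
  simp only [mul_zero, zero_mul, add_zero]
  rw [tsum_mul_tsum_of_summable_norm h2 h6]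
  refine tsum_congr fun p => ?_
  rw [← Complex.exp_add, Ftheta]
  congr 1
  push_cast
  ring

lemma summable_Ftheta {τ : ℂ} (hτ : 0 < τ.im) (a b : ℝ) : Summable (Ftheta a b τ) := by
  refine (summable_mul_of_summable_norm (gsum 2 a two_pos hτ) (gsum 6 b (by norm_num) hτ)).congr
    fun p => ?_
  rw [← Complex.exp_add, Ftheta]
  congr 1
  push_cast
  ring

end Aux

/-- Theta relation (3.13). -/
theorem theta_relation_B (τ : ℂ) (hτ : 0 < τ.im) :
    thetaC 2 2 τ * thetaC 6 4 τ + thetaC 2 0 τ * thetaC 6 2 τ =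
      thetaC 2 1 τ * (thetaC 6 1 τ + thetaC 6 5 τ) := by
  rw [mul_add, prodRep hτ 2 4, prodRep hτ 0 2, prodRep hτ 1 1, prodRep hτ 1 5,
    splitSum _ (summable_Ftheta hτ 2 4) eL, splitSum _ (summable_Ftheta hτ 0 2) eL,
    splitSum _ (summable_Ftheta hτ 1 1) eR1, splitSum _ (summable_Ftheta hτ 1 5) eR2]
  have e1 : (∑' p : ℤ × ℤ, Ftheta 2 4 τ (eL (Sum.inl p)))
      = ∑' p : ℤ × ℤ, Ftheta 1 1 τ (eR1 (Sum.inr p)) :=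
    tsum_congr fun p => by
      simp only [eL, eR1, Equiv.coe_fn_mk, Sum.elim_inl, Sum.elim_inr, Ftheta]
      congr 1
      push_cast
      ring
  have e2 : (∑' p : ℤ × ℤ, Ftheta 2 4 τ (eL (Sum.inr p)))
      = ∑' p : ℤ × ℤ, Ftheta 1 5 τ (eR2 (Sum.inl p)) :=
    tsum_congr fun p => by
      simp only [eL, eR2, Equiv.coe_fn_mk, Sum.elim_inl, Sum.elim_inr, Ftheta]
      congr 1
      push_cast
      ring
  have e3 : (∑' p : ℤ × ℤ, Ftheta 0 2 τ (eL (Sum.inl p)))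
      = ∑' p : ℤ × ℤ, Ftheta 1 1 τ (eR1 (Sum.inl p)) :=
    tsum_congr fun p => by
      simp only [eL, eR1, Equiv.coe_fn_mk, Sum.elim_inl, Sum.elim_inr, Ftheta]
      congr 1
      push_cast
      ring
  have e4 : (∑' p : ℤ × ℤ, Ftheta 0 2 τ (eL (Sum.inr p)))
      = ∑' p : ℤ × ℤ, Ftheta 1 5 τ (eR2 (Sum.inr p)) :=
    tsum_congr fun p => by
      simp only [eL, eR2, Equiv.coe_fn_mk, Sum.elim_inl, Sum.elim_inr, Ftheta]
      congr 1
      push_cast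
      ring
  rw [e1, e2, e3, e4]
  ring
end

section
/- Lattice identity underlying Lemma 3.3: Σ over pairs (R,S) ∈ ℤ² with R ≢ S (mod 2) of x^{2R² + 6S²} equals 2·Σ over pairs (j,k) ∈ ℤ² of x^{8(j+1/4)² + 24(k+1/4)²}, for any complex x with |x| < 1. -/
open Complex

def oddEquiv : Bool × (ℤ × ℤ) ≃ {p : ℤ × ℤ // (p.1 + p.2) % 2 ≠ 0} where
  toFun q :=
    if q.1 then ⟨(q.2.1 + 3 * q.2.2 + 1, q.2.1 - q.2.2), by omega⟩
    else ⟨(-q.2.1 - 3 * q.2.2 - 1, q.2.2 - q.2.1), by omega⟩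
  invFun p :=
    if (p.1.1 + 3 * p.1.2) % 4 = 1 then
      (true, ((p.1.1 + 3 * p.1.2 - 1) / 4, (p.1.1 - p.1.2 - 1) / 4))
    else
      (false, ((-p.1.1 - 3 * p.1.2 - 1) / 4, (p.1.2 - p.1.1 - 1) / 4))
  left_inv := by
    rintro ⟨b, j, k⟩
    cases b <;> simp only [if_true, if_false, Bool.false_eq_true] <;>
      split_ifs <;> simp_all <;> omega
  right_inv := by
    rintro ⟨⟨R, S⟩, hp⟩
    simp only [ne_eq] at hp
    by_cases h : (R + 3 * S) % 4 = 1 <;>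
      simp only [h, if_true, if_false, reduceIte] <;>
      · ext <;> simp <;> omega

lemma natAbs_le_aux (j k : ℤ) :
    j.natAbs + k.natAbs ≤ (8 * j ^ 2 + 4 * j + 24 * k ^ 2 + 12 * k + 2).toNat := by
  have h : (j.natAbs : ℤ) + (k.natAbs : ℤ) ≤ 8 * j ^ 2 + 4 * j + 24 * k ^ 2 + 12 * k + 2 := by
    rcases j.natAbs_eq with hj | hj <;> rcases k.natAbs_eq with hk | hk <;>
      nlinarith [sq_nonneg (16*j+3), sq_nonneg (16*j+5), sq_nonneg (48*k+11), sq_nonneg (48*k+13),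
        sq_nonneg j, sq_nonneg k]
  omega

/-- Lattice identity underlying Lemma 3.5. -/
theorem lattice_identity (x : ℂ) (hx : ‖x‖ < 1) :
    (∑' p : {p : ℤ × ℤ // (p.1 + p.2) % 2 ≠ 0},
        x ^ (2 * (p : ℤ × ℤ).1 ^ 2 + 6 * (p : ℤ × ℤ).2 ^ 2)) =
      2 * ∑' p : ℤ × ℤ,
        x ^ ((8 * ((p.1 : ℂ) + 1/4) ^ 2 + 24 * ((p.2 : ℂ) + 1/4) ^ 2)) := by
  set N : ℤ × ℤ → ℤ := fun p => 8 * p.1 ^ 2 + 4 * p.1 + 24 * p.2 ^ 2 + 12 * p.2 + 2 with hN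
  set g : ℤ × ℤ → ℂ := fun p => x ^ (N p) with hg
  -- rewrite RHS terms as integer powers
  have hrhs : ∀ p : ℤ × ℤ,
      x ^ ((8 * ((p.1 : ℂ) + 1/4) ^ 2 + 24 * ((p.2 : ℂ) + 1/4) ^ 2)) = g p := by
    intro p
    have : (8 * ((p.1 : ℂ) + 1/4) ^ 2 + 24 * ((p.2 : ℂ) + 1/4) ^ 2) = ((N p : ℤ) : ℂ) := by
      simp only [hN]; push_cast; ring
    rw [this, Complex.cpow_intCast]
  -- summability of g
  have hg_sum : Summable g := by
    have hgeo : Summable (fun n : ℕ => ‖x‖ ^ n) :=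
      summable_geometric_of_lt_one (by positivity) hx
    have h1 : Summable (fun n : ℤ => ‖x‖ ^ n.natAbs) := by
      apply Summable.of_nat_of_neg <;> simpa using hgeo
    have h2 := h1.mul_of_nonneg h1 (fun n => by positivity) (fun n => by positivity)
    apply Summable.of_norm_bounded h2
    intro p
    simp only [hg, norm_zpow, ← pow_add]
    have hNn : (0:ℤ) ≤ N p := by
      simp only [hN]; nlinarith [sq_nonneg (4*p.1+1), sq_nonneg (4*p.2+1)]
    rw [show (N p) = ((N p).toNat : ℤ) by omega, zpow_natCast]
    exact pow_le_pow_of_le_one (norm_nonneg x) hx.le (natAbs_le_aux p.1 p.2)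
  -- LHS via the equivalence
  have hlhs : (∑' p : {p : ℤ × ℤ // (p.1 + p.2) % 2 ≠ 0},
      x ^ (2 * (p : ℤ × ℤ).1 ^ 2 + 6 * (p : ℤ × ℤ).2 ^ 2)) =
      ∑' q : Bool × (ℤ × ℤ), g q.2 := by
    rw [← oddEquiv.tsum_eq]
    congr 1
    funext q
    obtain ⟨b, j, k⟩ := q
    cases b <;>
      · simp only [oddEquiv, Equiv.coe_fn_mk, if_true, if_false, Bool.false_eq_true, hg, hN]
        congr 1
        ring
  rw [hlhs]
  have hsum2 : Summable (fun q : Bool × (ℤ × ℤ) => g q.2) := by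
    have h0 : Summable (fun _ : Bool => (1:ℝ)) := summable_of_finite_support (Set.toFinite _)
    apply Summable.of_norm_bounded (h0.mul_of_nonneg hg_sum.norm (fun _ => zero_le_one) (fun p => norm_nonneg _))
    intro q; simp
  rw [Summable.tsum_prod' hsum2 (fun b => hg_sum)]
  rw [tsum_fintype]
  simp only [Fintype.sum_bool]
  simp only [hrhs]
  rw [← two_mul]
end

section
/- Change-of-parity lattice identity: Σ_{(R,S) ∈ ℤ², R ≢ S mod 2} x^{2R²+6S²} = Σ_{(r,s) ∈ (1/2+ℤ)², r ≡ s mod 2} x^{2r²+6s²}, for |x| < 1, via the bijection s = (R+S)/2, r = (R-3S)/2. (Here r ≡ s mod 2 means r - s ∈ 2ℤ.) -/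
open Complex

-- The change-of-parity bijection.
def copEquiv : {p : ℤ × ℤ // (p.1 + p.2) % 2 ≠ 0} ≃ {p : ℤ × ℤ // (p.1 - p.2) % 2 = 0} where
  toFun p := ⟨((p.1.1 - 3 * p.1.2 - 1) / 2, (p.1.1 + p.1.2 - 1) / 2), by
    have := p.2; omega⟩
  invFun p := ⟨((p.1.1 + 3 * p.1.2 + 2) / 2, (p.1.2 - p.1.1) / 2), by
    have := p.2; omega⟩
  left_inv p := by
    have := p.2
    ext <;> simp only <;> omega
  right_inv p := by
    have := p.2
    ext <;> simp only <;> omega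

/-- Change-of-parity lattice identity: summing over half-odd-integer pairs `(r,s) = (j+1/2,k+1/2)`
with `r ≡ s (mod 2)`, i.e. `r - s ∈ 2ℤ`. -/
theorem change_of_parity_lattice (x : ℂ) (hx : ‖x‖ < 1) :
    (∑' p : {p : ℤ × ℤ // (p.1 + p.2) % 2 ≠ 0},
        x ^ (2 * (p : ℤ × ℤ).1 ^ 2 + 6 * (p : ℤ × ℤ).2 ^ 2)) =
      ∑' p : {p : ℤ × ℤ // (p.1 - p.2) % 2 = 0},
        x ^ ((2 * (((p : ℤ × ℤ).1 : ℂ) + 1/2) ^ 2 + 6 * (((p : ℤ × ℤ).2 : ℂ) + 1/2) ^ 2)) := by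
  rw [← Equiv.tsum_eq copEquiv]
  refine tsum_congr fun p => ?_
  obtain ⟨⟨R, S⟩, hp⟩ := p
  simp only [copEquiv, Equiv.coe_fn_mk]
  have h1 : (2 : ℤ) * ((R - 3 * S - 1) / 2) + 1 = R - 3 * S := by
    simp only at hp; omega
  have h2 : (2 : ℤ) * ((R + S - 1) / 2) + 1 = R + S := by
    simp only at hp; omega
  have c1 : (((R - 3 * S - 1) / 2 : ℤ) : ℂ) + 1 / 2 = ((R : ℂ) - 3 * S) / 2 := by
    have := congrArg (fun n : ℤ => (n : ℂ)) h1
    push_cast at this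
    linear_combination this / 2
  have c2 : (((R + S - 1) / 2 : ℤ) : ℂ) + 1 / 2 = ((R : ℂ) + S) / 2 := by
    have := congrArg (fun n : ℤ => (n : ℂ)) h2
    push_cast at this
    linear_combination this / 2
  rw [show (2 * ((((R - 3 * S - 1) / 2 : ℤ) : ℂ) + 1/2) ^ 2 +
      6 * ((((R + S - 1) / 2 : ℤ) : ℂ) + 1/2) ^ 2) = ((2 * R ^ 2 + 6 * S ^ 2 : ℤ) : ℂ) by
    rw [c1, c2]; push_cast; ring]
  rw [Complex.cpow_intCast]
end

section
/- The generating function for 2-colored generalized Frobenius partitions satisfies CΦ₂(q) = (q²;q⁴)_∞ / ((q;q²)_∞⁴ (q⁴;q⁴)_∞), where CΦ₂(q) is the constant term in ζ of (-ζq; q)_∞² (-ζ^{-1}; q)_∞². -/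
open Complex

open Finset

section Aux

noncomputable def fq (q : ℂ) (N : ℕ) : ℂ := ∏ i ∈ Finset.range N, (1 - q ^ (i + 1))

noncomputable def Gq (q : ℂ) (m : ℕ) (k : ℤ) : ℂ :=
  if 0 ≤ k ∧ k ≤ m then fq q m / (fq q k.toNat * fq q (m - k.toNat)) else 0

variable {q : ℂ} (hq : ‖q‖ < 1) (hq0 : q ≠ 0)

include hq

lemma one_sub_pow_ne (n : ℕ) (hn : 1 ≤ n) : 1 - q ^ n ≠ 0 := by
  intro h
  have h2 : ‖q ^ n‖ < 1 := by
    rw [norm_pow]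
    calc ‖q‖ ^ n ≤ ‖q‖ ^ 1 :=
          pow_le_pow_of_le_one (norm_nonneg q) hq.le hn
      _ < 1 := by simpa using hq
  rw [sub_eq_zero] at h
  rw [← h] at h2
  simp at h2

lemma fq_ne_zero (N : ℕ) : fq q N ≠ 0 :=
  Finset.prod_ne_zero_iff.2 fun i _ => one_sub_pow_ne hq (i + 1) (Nat.le_add_left 1 i)

omit hq in
lemma fq_succ (N : ℕ) : fq q (N + 1) = fq q N * (1 - q ^ (N + 1)) := by
  rw [fq, Finset.prod_range_succ]; rfl

lemma Gq_zero (m : ℕ) : Gq q m 0 = 1 := by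
  have h := fq_ne_zero hq m
  simp only [Gq, if_pos (by omega : (0:ℤ) ≤ 0 ∧ (0:ℤ) ≤ m), Int.toNat_zero, Nat.sub_zero]
  rw [show fq q 0 = 1 by simp [fq], one_mul, div_self h]

omit hq in
lemma Gq_neg {m : ℕ} {k : ℤ} (h : k < 0) : Gq q m k = 0 := by
  rw [Gq, if_neg]; omega

omit hq in
lemma Gq_gt {m : ℕ} {k : ℤ} (h : (m : ℤ) < k) : Gq q m k = 0 := by
  rw [Gq, if_neg]; omega

lemma Gq_self (m : ℕ) : Gq q m m = 1 := by
  have h := fq_ne_zero hq m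
  rw [Gq, if_pos (by omega)]
  rw [Int.toNat_natCast, Nat.sub_self, show fq q 0 = 1 by simp [fq], mul_one, div_self h]

include hq0 in
/-- Pascal recurrence 1. -/
lemma Gq_rec1 (m : ℕ) (k : ℤ) :
    Gq q (m + 1) k = Gq q m k + q ^ ((m : ℤ) + 1 - k) * Gq q m (k - 1) := by
  rcases lt_or_ge k 0 with h | h
  · rw [Gq_neg h, Gq_neg h, Gq_neg (by omega), mul_zero, add_zero]
  rcases eq_or_lt_of_le h with h0 | h1
  · rw [← h0, Gq_zero hq, Gq_zero hq, Gq_neg (by omega), mul_zero, add_zero]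
  rcases lt_or_ge (m : ℤ) k with h2 | h2
  · rcases lt_or_ge ((m:ℤ) + 1) k with h3 | h3
    · rw [Gq_gt (show ((m+1:ℕ):ℤ) < k by push_cast; omega), Gq_gt h2, Gq_gt (by omega)]
      simp
    · have h4 : k = (m:ℤ) + 1 := by omega
      rw [h4]
      have e : Gq q (m+1) ((m:ℤ)+1) = 1 := by
        rw [show ((m:ℤ)+1) = ((m+1:ℕ):ℤ) by push_cast; ring, Gq_self hq]
      rw [e, Gq_gt (by omega), show ((m:ℤ)+1-1) = (m:ℤ) by ring, Gq_self hq]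
      simp
  · -- main case: 1 ≤ k ≤ m
    obtain ⟨j, rfl⟩ : ∃ j : ℕ, k = (j : ℤ) := ⟨k.toNat, by omega⟩
    have hj1 : 1 ≤ j := by omega
    have hjm : j ≤ m := by omega
    unfold Gq
    rw [if_pos (by omega), if_pos (by omega), if_pos (by omega)]
    rw [show ((j:ℤ) - 1).toNat = j - 1 by omega, Int.toNat_natCast]
    rw [show (m:ℤ) + 1 - (j:ℤ) = ((m + 1 - j : ℕ) : ℤ) by
          rw [Nat.cast_sub (by omega)]; push_cast; ring, zpow_natCast]
    rw [show m + 1 - j = (m - j) + 1 by omega, show m - (j-1) = (m - j) + 1 by omega,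
        fq_succ (m - j), fq_succ m, show j = (j - 1) + 1 by omega, fq_succ (j-1),
        show j - 1 + 1 = j by omega]
    have hp : q ^ (m - j + 1) * q ^ j = q ^ (m + 1) := by
      rw [← pow_add]; congr 1; omega
    have n1 := fq_ne_zero hq (j - 1)
    have n2 := fq_ne_zero hq (m - j)
    have n3 := fq_ne_zero hq m
    have n4 := one_sub_pow_ne hq j hj1
    have n5 := one_sub_pow_ne hq (m - j + 1) (by omega)
    rw [← hp]
    field_simp
    ring

include hq0 in
/-- Pascal recurrence 2. -/
lemma Gq_rec2 (m : ℕ) (k : ℤ) :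
    Gq q (m + 1) k = q ^ k * Gq q m k + Gq q m (k - 1) := by
  rcases lt_or_ge k 0 with h | h
  · rw [Gq_neg h, Gq_neg h, Gq_neg (by omega), mul_zero, add_zero]
  rcases eq_or_lt_of_le h with h0 | h1
  · rw [← h0, Gq_zero hq, Gq_zero hq, Gq_neg (by omega), add_zero, zpow_zero, mul_one]
  rcases lt_or_ge (m : ℤ) k with h2 | h2
  · rcases lt_or_ge ((m:ℤ) + 1) k with h3 | h3
    · rw [Gq_gt (show ((m+1:ℕ):ℤ) < k by push_cast; omega), Gq_gt h2, Gq_gt (by omega)]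
      simp
    · have h4 : k = (m:ℤ) + 1 := by omega
      rw [h4]
      have e : Gq q (m+1) ((m:ℤ)+1) = 1 := by
        rw [show ((m:ℤ)+1) = ((m+1:ℕ):ℤ) by push_cast; ring, Gq_self hq]
      rw [e, Gq_gt (by omega), show ((m:ℤ)+1-1) = (m:ℤ) by ring, Gq_self hq]
      simp
  · -- main case: 1 ≤ k ≤ m
    obtain ⟨j, rfl⟩ : ∃ j : ℕ, k = (j : ℤ) := ⟨k.toNat, by omega⟩
    have hj1 : 1 ≤ j := by omega
    have hjm : j ≤ m := by omega
    unfold Gq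
    rw [if_pos (by omega), if_pos (by omega), if_pos (by omega)]
    rw [show ((j:ℤ) - 1).toNat = j - 1 by omega, Int.toNat_natCast, zpow_natCast]
    rw [show m + 1 - j = (m - j) + 1 by omega, show m - (j-1) = (m - j) + 1 by omega,
        fq_succ (m - j), fq_succ m, show j = (j - 1) + 1 by omega, fq_succ (j-1),
        show j - 1 + 1 = j by omega]
    have hp : q ^ j * q ^ (m - j + 1) = q ^ (m + 1) := by
      rw [← pow_add]; congr 1; omega
    have n1 := fq_ne_zero hq (j - 1)
    have n2 := fq_ne_zero hq (m - j)
    have n3 := fq_ne_zero hq m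
    have n4 := one_sub_pow_ne hq j hj1
    have n5 := one_sub_pow_ne hq (m - j + 1) (by omega)
    rw [← hp]
    field_simp
    ring

include hq0 in
/-- Two-step recurrence for the central Gaussian binomials. -/
lemma Gq_rec (N : ℕ) (n : ℤ) :
    Gq q (2*N + 2) ((N:ℤ) + 1 + n) =
      (1 + q ^ (2*N + 1)) * Gq q (2*N) ((N:ℤ) + n)
      + q ^ ((N:ℤ) + 1 + n) * Gq q (2*N) ((N:ℤ) + n + 1)
      + q ^ ((N:ℤ) + 1 - n) * Gq q (2*N) ((N:ℤ) + n - 1) := by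
  have e1 := Gq_rec1 hq hq0 (2*N + 1) ((N:ℤ) + 1 + n)
  have e2 := Gq_rec2 hq hq0 (2*N) ((N:ℤ) + 1 + n)
  have e3 := Gq_rec2 hq hq0 (2*N) ((N:ℤ) + n)
  rw [show (2*N + 1) + 1 = 2*N + 2 by ring] at e1
  rw [show ((2*N + 1 : ℕ):ℤ) + 1 - ((N:ℤ) + 1 + n) = (N:ℤ) + 1 - n by push_cast; ring] at e1
  rw [show ((N:ℤ) + 1 + n - 1) = (N:ℤ) + n by ring] at e1 e2
  rw [e1, e2, e3, show ((N:ℤ) + 1 + n) = (N:ℤ) + n + 1 by ring]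
  rw [show ((N:ℤ) + n - 1) = (N:ℤ) + n - 1 by ring]
  have hz : q ^ ((N:ℤ) + 1 - n) * q ^ ((N:ℤ) + n) = q ^ (2*N + 1 : ℕ) := by
    rw [← zpow_add₀ hq0, show ((N:ℤ) + 1 - n) + ((N:ℤ) + n) = ((2*N + 1 : ℕ) : ℤ) by
      push_cast; ring, zpow_natCast]
  linear_combination Gq q (2*N) ((N:ℤ) + n) * hz

omit hq in
lemma half_mul (n : ℤ) : 2 * (n * (n + 1) / 2) = n * (n + 1) :=
  Int.two_mul_ediv_two_of_even (Int.even_mul_succ_self n)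

omit hq in
lemma triangle_succ (n : ℤ) : (n + 1) * (n + 2) / 2 = n * (n + 1) / 2 + (n + 1) := by
  have h1 := half_mul n
  have h2 := half_mul (n + 1)
  have h3 : (n + 1) * (n + 1 + 1) = n * (n + 1) + 2 * (n + 1) := by ring
  rw [show n + 2 = n + 1 + 1 by ring]
  linarith

noncomputable def tJ (q : ℂ) (N : ℕ) (n : ℤ) : ℂ :=
  Gq q (2 * N) ((N:ℤ) + n) * q ^ (n * (n + 1) / 2)

omit hq in
lemma tJ_zero_of_lt {N : ℕ} {n : ℤ} (h : n < -(N:ℤ)) : tJ q N n = 0 := by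
  rw [tJ, Gq_neg (by omega), zero_mul]

omit hq in
lemma tJ_zero_of_gt {N : ℕ} {n : ℤ} (h : (N:ℤ) < n) : tJ q N n = 0 := by
  rw [tJ, Gq_gt (by push_cast; omega), zero_mul]

include hq0 in
lemma tJ_rec (N : ℕ) (n : ℤ) :
    tJ q (N + 1) n = (1 + q ^ (2*N + 1)) * tJ q N n
      + q ^ (N + 1) * tJ q N (n - 1) + q ^ N * tJ q N (n + 1) := by
  unfold tJ
  rw [show 2 * (N + 1) = 2*N + 2 by ring, show ((N+1 : ℕ):ℤ) + n = (N:ℤ) + 1 + n by push_cast; ring,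
      Gq_rec hq hq0 N n]
  have c1 : q ^ ((N:ℤ) + 1 - n) * q ^ (n * (n + 1) / 2) = q ^ (N+1) * q ^ ((n-1) * (n-1+1) / 2) := by
    rw [← zpow_add₀ hq0, show (q : ℂ) ^ (N + 1) = q ^ ((N+1 : ℕ) : ℤ) by rw [zpow_natCast],
        ← zpow_add₀ hq0]
    congr 1
    rw [show n - 1 + 1 = n by ring]
    have := triangle_succ (n - 1)
    rw [show n - 1 + 2 = n + 1 by ring, show n - 1 + 1 = n by ring] at this
    push_cast
    linarith
  have c2 : q ^ ((N:ℤ) + 1 + n) * q ^ (n * (n + 1) / 2) = q ^ N * q ^ ((n+1) * (n+1+1) / 2) := by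
    rw [← zpow_add₀ hq0, show (q : ℂ) ^ N = q ^ ((N : ℕ) : ℤ) by rw [zpow_natCast],
        ← zpow_add₀ hq0]
    congr 1
    rw [show n + 1 + 1 = n + 2 by ring]
    have := triangle_succ n
    push_cast
    linarith
  rw [show (N:ℤ) + (n - 1) = (N:ℤ) + n - 1 by ring, show (N:ℤ) + (n + 1) = (N:ℤ) + n + 1 by ring]
  linear_combination Gq q (2*N) ((N:ℤ) + n - 1) * c1 + Gq q (2*N) ((N:ℤ) + n + 1) * c2

include hq0 in
/-- The finite Jacobi triple product identity. -/
lemma finite_jtp (ζ : ℂ) (hζ : ζ ≠ 0) (N : ℕ) :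
    ∏ j ∈ Finset.range N, ((1 + ζ * q ^ (j + 1)) * (1 + ζ⁻¹ * q ^ j)) =
      ∑ n ∈ Finset.Icc (-(N:ℤ)) (N:ℤ), tJ q N n * ζ ^ n := by
  induction N with
  | zero =>
      simp only [Finset.range_zero, Finset.prod_empty, Nat.cast_zero, neg_zero,
        Finset.Icc_self, Finset.sum_singleton]
      rw [tJ, show ((0:ℕ):ℤ) + 0 = 0 by norm_num, Gq_zero hq]
      norm_num
  | succ N ih =>
      rw [Finset.prod_range_succ, ih]
      have expand : (1 + ζ * q ^ (N + 1)) * (1 + ζ⁻¹ * q ^ N)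
          = 1 + q ^ (2*N + 1) + ζ * q ^ (N+1) + ζ⁻¹ * q ^ N := by
        field_simp
        ring
      rw [expand]
      rw [Finset.sum_mul]
      have hsplit : ∀ n ∈ Finset.Icc (-(N:ℤ)) (N:ℤ),
          tJ q N n * ζ ^ n * (1 + q ^ (2*N + 1) + ζ * q ^ (N+1) + ζ⁻¹ * q ^ N)
          = ((1 + q ^ (2*N + 1)) * tJ q N n * ζ ^ n)
            + (q ^ (N+1) * tJ q N n * ζ ^ (n+1))
            + (q ^ N * tJ q N n * ζ ^ (n-1)) := by
        intro n _
        rw [zpow_add₀ hζ, zpow_sub₀ hζ]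
        field_simp
      rw [Finset.sum_congr rfl hsplit]
      rw [Finset.sum_add_distrib, Finset.sum_add_distrib]
      -- reindex the two shifted sums
      have e2 : (∑ n ∈ Finset.Icc (-(N:ℤ)) (N:ℤ), q ^ (N+1) * tJ q N n * ζ ^ (n+1))
          = ∑ m ∈ Finset.Icc (-(N:ℤ) + 1) ((N:ℤ) + 1), q ^ (N+1) * tJ q N (m - 1) * ζ ^ m := by
        rw [← Finset.map_add_right_Icc _ _ (1:ℤ), Finset.sum_map]
        simp [addRightEmbedding, sub_eq_add_neg]
      have e3 : (∑ n ∈ Finset.Icc (-(N:ℤ)) (N:ℤ), q ^ N * tJ q N n * ζ ^ (n-1))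
          = ∑ m ∈ Finset.Icc (-(N:ℤ) - 1) ((N:ℤ) - 1), q ^ N * tJ q N (m + 1) * ζ ^ m := by
        rw [show -(N:ℤ) - 1 = -(N:ℤ) + -1 by ring, show (N:ℤ) - 1 = (N:ℤ) + -1 by ring,
          ← Finset.map_add_right_Icc _ _ (-1:ℤ), Finset.sum_map]
        simp [addRightEmbedding, sub_eq_add_neg]
      rw [e2, e3]
      -- extend all three sums to the big interval
      set B := Finset.Icc (-((N:ℕ):ℤ) - 1) (((N:ℕ):ℤ) + 1) with hB
      have big1 : (∑ n ∈ Finset.Icc (-(N:ℤ)) (N:ℤ), (1 + q ^ (2*N + 1)) * tJ q N n * ζ ^ n)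
          = ∑ n ∈ B, (1 + q ^ (2*N + 1)) * tJ q N n * ζ ^ n := by
        apply Finset.sum_subset (by rw [hB]; apply Finset.Icc_subset_Icc <;> omega)
        intro x _ hx
        simp only [Finset.mem_Icc, not_and_or, not_le] at hx
        rcases hx with h | h
        · rw [tJ_zero_of_lt h]; ring
        · rw [tJ_zero_of_gt h]; ring
      have big2 : (∑ m ∈ Finset.Icc (-(N:ℤ) + 1) ((N:ℤ) + 1), q ^ (N+1) * tJ q N (m - 1) * ζ ^ m)
          = ∑ m ∈ B, q ^ (N+1) * tJ q N (m - 1) * ζ ^ m := by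
        apply Finset.sum_subset (by rw [hB]; apply Finset.Icc_subset_Icc <;> omega)
        intro x _ hx
        simp only [Finset.mem_Icc, not_and_or, not_le] at hx
        rcases hx with h | h
        · rw [tJ_zero_of_lt (by omega)]; ring
        · rw [tJ_zero_of_gt (by omega)]; ring
      have big3 : (∑ m ∈ Finset.Icc (-(N:ℤ) - 1) ((N:ℤ) - 1), q ^ N * tJ q N (m + 1) * ζ ^ m)
          = ∑ m ∈ B, q ^ N * tJ q N (m + 1) * ζ ^ m := by
        apply Finset.sum_subset (by rw [hB]; apply Finset.Icc_subset_Icc <;> omega)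
        intro x _ hx
        simp only [Finset.mem_Icc, not_and_or, not_le] at hx
        rcases hx with h | h
        · rw [tJ_zero_of_lt (by omega)]; ring
        · rw [tJ_zero_of_gt (by omega)]; ring
      rw [big1, big2, big3, ← Finset.sum_add_distrib, ← Finset.sum_add_distrib]
      have : B = Finset.Icc (-((N+1:ℕ):ℤ)) ((N+1:ℕ):ℤ) := by
        rw [hB]; congr 1 <;> push_cast <;> ring
      rw [← this]
      apply Finset.sum_congr rfl
      intro n _
      rw [tJ_rec hq hq0 N n]
      ring

section Products

omit hq

lemma hasProd_zero_of_exists_zero {f : ℕ → ℂ} (n₀ : ℕ) (h : f n₀ = 0) : HasProd f 0 := by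
  have : ∀ᶠ s : Finset ℕ in Filter.atTop, ∏ i ∈ s, f i = 0 := by
    filter_upwards [Filter.eventually_ge_atTop {n₀}] with s hs
    exact Finset.prod_eq_zero (hs (Finset.mem_singleton_self n₀)) h
  exact Filter.Tendsto.congr' (by filter_upwards [this] with s hs using hs.symm) tendsto_const_nhds

lemma summable_log_one_add {u : ℕ → ℂ} (hu : Summable u) (h : ∀ n, 1 + u n ≠ 0) :
    Summable (fun n => Complex.log (1 + u n)) := by
  have h0 : Filter.Tendsto u Filter.atTop (nhds 0) := hu.tendsto_atTop_zero
  have hev : ∀ᶠ n in Filter.cofinite, ‖Complex.log (1 + u n)‖ ≤ (3/2) * ‖u n‖ := by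
    rw [Nat.cofinite_eq_atTop]
    have : ∀ᶠ n in Filter.atTop, ‖u n‖ ≤ 1/2 := by
      have := h0.norm
      simp only [norm_zero] at this
      exact this.eventually_le_const (by norm_num)
    filter_upwards [this] with n hn
    exact Complex.norm_log_one_add_half_le_self hn
  exact Summable.of_norm_bounded_eventually (hu.norm.mul_left (3/2)) hev

lemma multipliable_one_add {u : ℕ → ℂ} (hu : Summable u) :
    Multipliable (fun n => 1 + u n) := by
  by_cases h : ∀ n, 1 + u n ≠ 0
  · exact Complex.multipliable_of_summable_log (summable_log_one_add hu h)
  · push_neg at h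
    obtain ⟨n₀, hn₀⟩ := h
    exact ⟨0, hasProd_zero_of_exists_zero n₀ hn₀⟩

lemma tprod_one_add_ne_zero {u : ℕ → ℂ} (hu : Summable u) (h : ∀ n, 1 + u n ≠ 0) :
    ∏' n, (1 + u n) ≠ 0 := by
  have h2 := Complex.cexp_tsum_eq_tprod (f := fun n => 1 + u n)
      (fun n => h n) (summable_log_one_add hu h)
  rw [← h2]
  exact Complex.exp_ne_zero _

end Products

include hq in
lemma summable_aq (a : ℂ) : Summable (fun n : ℕ => -(a * q ^ n)) := by
  have : Summable (fun n : ℕ => q ^ n) := summable_geometric_of_norm_lt_one (by simpa using hq)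
  exact (this.mul_left a).neg

include hq in
lemma qPoch_multipliable (a : ℂ) : Multipliable (fun n : ℕ => 1 - a * q ^ n) := by
  have := multipliable_one_add (summable_aq hq a)
  simpa [sub_eq_add_neg] using this

include hq in
lemma qPoch_ne_zero (a : ℂ) (h : ∀ n : ℕ, 1 - a * q ^ n ≠ 0) : qPoch a q ≠ 0 := by
  have := tprod_one_add_ne_zero (summable_aq hq a) (fun n => by simpa [sub_eq_add_neg] using h n)
  rw [qPoch]
  simpa [sub_eq_add_neg] using this

include hq in
lemma qPoch_tendsto (a : ℂ) :
    Filter.Tendsto (fun N => ∏ i ∈ Finset.range N, (1 - a * q ^ i)) Filter.atTop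
      (nhds (qPoch a q)) :=
  HasProd.tendsto_prod_nat (qPoch_multipliable hq a).hasProd

include hq in
lemma fq_tendsto : Filter.Tendsto (fq q) Filter.atTop (nhds (qPoch q q)) := by
  have := qPoch_tendsto hq q
  apply this.congr
  intro N
  rw [fq]
  exact Finset.prod_congr rfl fun i _ => by rw [pow_succ']

section Bounds

omit hq

lemma geom_partial_le {r : ℝ} (hr0 : 0 ≤ r) (hr1 : r < 1) (b : ℕ) :
    ∑ i ∈ Finset.range b, r ^ (i + 1) ≤ r / (1 - r) := by
  have h1 : ∑ i ∈ Finset.range b, r ^ (i + 1) = r * ∑ i ∈ Finset.range b, r ^ i := by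
    rw [Finset.mul_sum]
    exact Finset.sum_congr rfl fun i _ => by rw [pow_succ']
  rw [h1, div_eq_mul_inv]
  apply mul_le_mul_of_nonneg_left _ hr0
  calc ∑ i ∈ Finset.range b, r ^ i ≤ ∑' i : ℕ, r ^ i :=
        Summable.sum_le_tsum _ (fun i _ => pow_nonneg hr0 i)
          (summable_geometric_of_lt_one hr0 hr1)
    _ = (1 - r)⁻¹ := tsum_geometric_of_lt_one hr0 hr1

include hq

lemma fq_add (a b : ℕ) : fq q (a + b) = fq q a * ∏ i ∈ Finset.range b, (1 - q ^ (a + i + 1)) := by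
  rw [fq, fq, Finset.prod_range_add]

lemma fq_shift_bound (a b : ℕ) :
    ‖∏ i ∈ Finset.range b, (1 - q ^ (a + i + 1))‖
      ≤ Real.exp (‖q‖ / (1 - ‖q‖)) := by
  set r := ‖q‖ with hr
  have hr0 : 0 ≤ r := norm_nonneg q
  rw [norm_prod]
  calc ∏ i ∈ Finset.range b, ‖1 - q ^ (a + i + 1)‖
      ≤ ∏ i ∈ Finset.range b, Real.exp (r ^ (i + 1)) := by
        apply Finset.prod_le_prod (fun i _ => norm_nonneg _)
        intro i _
        have h1 : ‖1 - q ^ (a + i + 1)‖ ≤ 1 + r ^ (a + i + 1) := by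
          calc ‖1 - q ^ (a + i + 1)‖ ≤ ‖(1:ℂ)‖ + ‖q ^ (a + i + 1)‖ :=
                norm_sub_le _ _
            _ = 1 + r ^ (a + i + 1) := by rw [norm_one, norm_pow]
        have h2 : r ^ (a + i + 1) ≤ r ^ (i + 1) :=
          pow_le_pow_of_le_one hr0 hq.le (by omega)
        have h3 : (1 : ℝ) + r ^ (i + 1) ≤ Real.exp (r ^ (i + 1)) := by
          have := Real.add_one_le_exp (r ^ (i + 1))
          linarith
        linarith
    _ = Real.exp (∑ i ∈ Finset.range b, r ^ (i + 1)) := (Real.exp_sum _ _).symm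
    _ ≤ Real.exp (r / (1 - r)) := Real.exp_le_exp.2 (geom_partial_le hr0 hq b)

lemma fq_abs_pos (c : ℕ) : 0 < ‖fq q c‖ :=
  norm_pos_iff.mpr (fq_ne_zero hq c)

lemma fq_inv_bound (c : ℕ) :
    (‖fq q c‖)⁻¹
      ≤ Real.exp (‖q‖ / ((1 - ‖q‖) * (1 - ‖q‖))) := by
  set r := ‖q‖ with hr
  have hr0 : 0 ≤ r := norm_nonneg q
  have hr1 : r < 1 := hq
  have hd : (0:ℝ) < 1 - r := by linarith
  have hfac : ∀ i : ℕ, 0 ≤ 1 - r ^ (i + 1) := by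
    intro i
    have h := pow_le_pow_of_le_one hr0 hr1.le (show 1 ≤ i + 1 by omega)
    rw [pow_one] at h
    linarith
  have step1 : ∏ i ∈ Finset.range c, (1 - r ^ (i + 1)) ≤ ‖fq q c‖ := by
    rw [fq, norm_prod]
    apply Finset.prod_le_prod (fun i _ => hfac i)
    intro i _
    calc 1 - r ^ (i + 1) = ‖(1:ℂ)‖ - ‖q ^ (i + 1)‖ := by
          rw [norm_one, norm_pow]
      _ ≤ ‖1 - q ^ (i + 1)‖ := by
          have := norm_sub_norm_le (1 : ℂ) (q ^ (i + 1))
          simpa using this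
  have step2 : (1:ℝ) ≤ (∏ i ∈ Finset.range c, (1 - r ^ (i + 1)))
      * Real.exp (r / ((1 - r) * (1 - r))) := by
    have expsum : ∑ i ∈ Finset.range c, r ^ (i + 1) / (1 - r) ≤ r / ((1 - r) * (1 - r)) := by
      rw [← Finset.sum_div, div_le_div_iff₀ hd (by positivity)]
      have hg := geom_partial_le hr0 hr1 c
      calc (∑ i ∈ Finset.range c, r ^ (i + 1)) * ((1 - r) * (1 - r))
          ≤ (r / (1-r)) * ((1 - r) * (1 - r)) :=
            mul_le_mul_of_nonneg_right hg (by positivity)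
        _ = r * (1 - r) := by field_simp
    calc (1:ℝ) = ∏ i ∈ Finset.range c, 1 := by simp
      _ ≤ ∏ i ∈ Finset.range c, ((1 - r ^ (i + 1)) * Real.exp (r ^ (i + 1) / (1 - r))) := by
          apply Finset.prod_le_prod (fun i _ => by norm_num)
          intro i _
          have hs0 : 0 ≤ r ^ (i+1) := pow_nonneg hr0 _
          have hs1 : r ^ (i+1) ≤ r := by
            have h := pow_le_pow_of_le_one hr0 hr1.le (show 1 ≤ i + 1 by omega)
            rwa [pow_one] at h
          have he : 1 + r ^ (i+1) / (1 - r) ≤ Real.exp (r ^ (i+1) / (1 - r)) := by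
            have := Real.add_one_le_exp (r ^ (i+1) / (1 - r))
            linarith
          have expand : (1:ℝ) ≤ (1 - r ^ (i+1)) * (1 + r ^ (i+1) / (1-r)) := by
            rw [← sub_nonneg]
            have heq : (1 - r ^ (i+1)) * (1 + r ^ (i+1) / (1-r)) - 1
                = (r ^ (i+1) * (r - r ^ (i+1))) / (1 - r) := by field_simp; ring
            rw [heq]
            exact div_nonneg (mul_nonneg hs0 (by linarith)) hd.le
          nlinarith [hfac i]
      _ = (∏ i ∈ Finset.range c, (1 - r ^ (i + 1)))
          * Real.exp (∑ i ∈ Finset.range c, r ^ (i + 1) / (1 - r)) := by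
          rw [Finset.prod_mul_distrib, Real.exp_sum]
      _ ≤ _ := by
          apply mul_le_mul_of_nonneg_left (Real.exp_le_exp.2 expsum)
          exact Finset.prod_nonneg fun i _ => hfac i
  have key : (1:ℝ) ≤ ‖fq q c‖ * Real.exp (r / ((1 - r) * (1 - r))) := by
    calc (1:ℝ) ≤ (∏ i ∈ Finset.range c, (1 - r ^ (i + 1)))
          * Real.exp (r / ((1 - r) * (1 - r))) := step2
      _ ≤ _ := mul_le_mul_of_nonneg_right step1 (Real.exp_nonneg _)
  have hpos := fq_abs_pos hq c
  rw [← one_div, div_le_iff₀ hpos, mul_comm]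
  linarith

/-- Uniform bound on the Gaussian binomials. -/
lemma Gq_bound (N : ℕ) (n : ℤ) :
    ‖Gq q (2 * N) ((N:ℤ) + n)‖
      ≤ Real.exp (‖q‖ / (1 - ‖q‖)) *
        Real.exp (‖q‖ / ((1 - ‖q‖) * (1 - ‖q‖))) := by
  set r := ‖q‖ with hr
  by_cases hcond : 0 ≤ (N:ℤ) + n ∧ (N:ℤ) + n ≤ (2 * N : ℕ)
  · set a := ((N:ℤ) + n).toNat with ha
    have hab : 2 * N = a + (2 * N - a) := by omega
    set b := 2 * N - a with hb
    rw [Gq, if_pos hcond, ← ha, ← hb]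
    have : fq q (2 * N) / (fq q a * fq q b)
        = (∏ i ∈ Finset.range b, (1 - q ^ (a + i + 1))) * (fq q b)⁻¹ := by
      rw [hab, fq_add hq a b]
      field_simp [fq_ne_zero hq a, fq_ne_zero hq b]
    rw [this, norm_mul, norm_inv]
    exact mul_le_mul (fq_shift_bound hq a b) (fq_inv_bound hq b)
      (by positivity) (Real.exp_nonneg _)
  · rw [Gq, if_neg hcond]
    simp only [norm_zero]
    positivity

end Bounds

section SummableBound

omit hq

lemma aux_summable {r c : ℝ} (hr0 : 0 ≤ r) (hr1 : r < 1) (hc : 0 ≤ c) :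
    Summable (fun k : ℕ => r ^ (k * (k + 1) / 2) * c ^ k) := by
  obtain ⟨K, hK⟩ : ∃ K : ℕ, r ^ K * c < 1/2 := by
    have h0 : Filter.Tendsto (fun k : ℕ => r ^ k * c) Filter.atTop (nhds (0 * c)) :=
      (tendsto_pow_atTop_nhds_zero_of_lt_one hr0 hr1).mul_const c
    rw [zero_mul] at h0
    exact (h0.eventually_lt_const (by norm_num : (0:ℝ) < 1/2)).exists
  apply Summable.of_norm_bounded_eventually (g := fun k : ℕ => (1/2 : ℝ) ^ k)
    (summable_geometric_of_lt_one (by norm_num) (by norm_num))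
  rw [Nat.cofinite_eq_atTop]
  filter_upwards [Filter.eventually_ge_atTop (2 * K)] with k hk
  have hTk : K * k ≤ k * (k + 1) / 2 := by
    rw [Nat.le_div_iff_mul_le (by norm_num)]
    calc K * k * 2 = k * (2 * K) := by ring
      _ ≤ k * (k + 1) := Nat.mul_le_mul_left k (by omega)
  have h1 : r ^ (k * (k + 1) / 2) ≤ (r ^ K) ^ k := by
    rw [← pow_mul]
    exact pow_le_pow_of_le_one hr0 hr1.le hTk
  have h2 : r ^ (k * (k + 1) / 2) * c ^ k ≤ (r ^ K * c) ^ k := by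
    rw [mul_pow]
    exact mul_le_mul_of_nonneg_right h1 (pow_nonneg hc k)
  rw [Real.norm_of_nonneg (by positivity)]
  calc r ^ (k * (k + 1) / 2) * c ^ k ≤ (r ^ K * c) ^ k := h2
    _ ≤ (1/2) ^ k := pow_le_pow_left₀ (by positivity) hK.le k
end SummableBound

omit hq in
lemma tri_nonneg (n : ℤ) : 0 ≤ n * (n + 1) / 2 := by
  have h : 0 ≤ n * (n + 1) := by
    rcases le_or_gt 0 n with h | h
    · exact mul_nonneg h (by omega)
    · nlinarith [mul_nonneg (neg_nonneg.2 (by omega : n ≤ 0)) (neg_nonneg.2 (by omega : n + 1 ≤ 0))]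
  exact Int.ediv_nonneg h (by norm_num)

omit hq in
lemma toNat_cast_div (m : ℕ) : ((m:ℤ) / 2).toNat = m / 2 := by omega

omit hq in
lemma toNat_tri_nat (k : ℕ) : (((k:ℤ) * ((k:ℤ) + 1)) / 2).toNat = k * (k + 1) / 2 := by
  rw [show (k:ℤ) * ((k:ℤ) + 1) = ((k * (k + 1) : ℕ) : ℤ) by push_cast; ring, toNat_cast_div]

omit hq in
lemma toNat_tri_neg (k : ℕ) : ((-(k:ℤ)) * (-(k:ℤ) + 1) / 2).toNat = k * (k - 1) / 2 := by
  rcases Nat.eq_zero_or_pos k with rfl | hk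
  · norm_num
  rw [show (-(k:ℤ)) * (-(k:ℤ) + 1) = ((k * (k - 1) : ℕ) : ℤ) by
      rw [Nat.cast_mul, Nat.cast_sub hk]; push_cast; ring, toNat_cast_div]

omit hq in
lemma bound_summable {r c : ℝ} (hr0 : 0 ≤ r) (hr1 : r < 1) (hc : 0 ≤ c) :
    Summable (fun n : ℤ => r ^ (n * (n + 1) / 2).toNat * c ^ n.natAbs) := by
  apply Summable.of_nat_of_neg
  · apply (aux_summable hr0 hr1 hc).congr
    intro k
    rw [toNat_tri_nat, Int.natAbs_natCast]
  · have base := (aux_summable hr0 hr1 hc).mul_left c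
    have : Summable (fun k : ℕ => r ^ (k * (k - 1) / 2) * c ^ k) := by
      rw [← summable_nat_add_iff 1]
      apply base.congr
      intro k
      rw [show (k + 1) * (k + 1 - 1) / 2 = k * (k + 1) / 2 by
        rw [Nat.add_sub_cancel, Nat.mul_comm], pow_succ]
      ring
    apply this.congr
    intro k
    rw [toNat_tri_neg, Int.natAbs_neg, Int.natAbs_natCast]

include hq in
lemma qPoch_q_ne_zero : qPoch q q ≠ 0 :=
  qPoch_ne_zero hq q (fun n => by
    rw [← pow_succ']
    exact one_sub_pow_ne hq (n+1) (by omega))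

omit hq in
lemma zeta_zpow_bound (ζ : ℂ) (hζ : ζ ≠ 0) (n : ℤ) :
    ‖ζ ^ n‖ ≤ (max (‖ζ‖) (‖ζ‖)⁻¹) ^ n.natAbs := by
  set c := max (‖ζ‖) (‖ζ‖)⁻¹ with hc
  rcases le_or_gt 0 n with h | h
  · lift n to ℕ using h
    rw [zpow_natCast, norm_pow, Int.natAbs_natCast]
    exact pow_le_pow_left₀ (norm_nonneg ζ) (le_max_left _ _) n
  · obtain ⟨m, rfl⟩ : ∃ m : ℕ, n = -(m : ℤ) := ⟨n.natAbs, by omega⟩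
    rw [zpow_neg, ← inv_zpow, zpow_natCast, norm_pow, Int.natAbs_neg, Int.natAbs_natCast, norm_inv]
    exact pow_le_pow_left₀ (by positivity) (le_max_right _ _) m

include hq hq0 in
/-- The Jacobi triple product identity. -/
theorem jtp (ζ : ℂ) (hζ : ζ ≠ 0) :
    qPoch (-ζ * q) q * qPoch (-ζ⁻¹) q * qPoch q q
      = ∑' n : ℤ, q ^ (n * (n + 1) / 2) * ζ ^ n := by
  set F := qPoch q q with hFdef
  have hF : F ≠ 0 := qPoch_q_ne_zero hq
  set r := ‖q‖ with hr
  have hr0 : 0 ≤ r := norm_nonneg q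
  set c := max (‖ζ‖) (‖ζ‖)⁻¹ with hc
  have hc0 : 0 ≤ c := le_trans (norm_nonneg ζ) (le_max_left _ _)
  set M := Real.exp (r / (1 - r)) * Real.exp (r / ((1 - r) * (1 - r))) with hM
  -- convergence of the partial products
  have hA : Filter.Tendsto (fun N => ∏ j ∈ Finset.range N, (1 + ζ * q ^ (j+1))) Filter.atTop
      (nhds (qPoch (-ζ * q) q)) :=
    (qPoch_tendsto hq (-ζ * q)).congr fun N =>
      Finset.prod_congr rfl fun i _ => by ring
  have hB : Filter.Tendsto (fun N => ∏ j ∈ Finset.range N, (1 + ζ⁻¹ * q ^ j)) Filter.atTop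
      (nhds (qPoch (-ζ⁻¹) q)) :=
    (qPoch_tendsto hq (-ζ⁻¹)).congr fun N =>
      Finset.prod_congr rfl fun i _ => by ring
  have hLHS : Filter.Tendsto
      (fun N => ∏ j ∈ Finset.range N, ((1 + ζ * q ^ (j+1)) * (1 + ζ⁻¹ * q ^ j))) Filter.atTop
      (nhds (qPoch (-ζ * q) q * qPoch (-ζ⁻¹) q)) :=
    (hA.mul hB).congr fun N => (Finset.prod_mul_distrib).symm
  -- pointwise limit of the summands
  have hGlim : ∀ n : ℤ, Filter.Tendsto (fun N => Gq q (2*N) ((N:ℤ) + n)) Filter.atTop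
      (nhds F⁻¹) := by
    intro n
    have h2N : Filter.Tendsto (fun N : ℕ => 2 * N) Filter.atTop Filter.atTop :=
      Filter.tendsto_atTop_atTop.2 fun b => ⟨b, fun a ha => by omega⟩
    have ha : Filter.Tendsto (fun N : ℕ => ((N:ℤ) + n).toNat) Filter.atTop Filter.atTop :=
      Filter.tendsto_atTop_atTop.2 fun b => ⟨b + n.natAbs, fun a haa => by omega⟩
    have hb : Filter.Tendsto (fun N : ℕ => 2 * N - ((N:ℤ) + n).toNat) Filter.atTop
        Filter.atTop :=
      Filter.tendsto_atTop_atTop.2 fun b => ⟨b + n.natAbs, fun a haa => by omega⟩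
    have main : Filter.Tendsto
        (fun N => fq q (2*N) / (fq q (((N:ℤ) + n).toNat) * fq q (2*N - ((N:ℤ) + n).toNat)))
        Filter.atTop (nhds (F / (F * F))) :=
      Filter.Tendsto.div ((fq_tendsto hq).comp h2N)
        (((fq_tendsto hq).comp ha).mul ((fq_tendsto hq).comp hb)) (mul_ne_zero hF hF)
    have heq : F / (F * F) = F⁻¹ := by field_simp
    rw [heq] at main
    apply Filter.Tendsto.congr' _ main
    filter_upwards [Filter.eventually_ge_atTop n.natAbs] with N hN
    rw [Gq, if_pos (by omega)]
  have htJ : ∀ n : ℤ, Filter.Tendsto (fun N => tJ q N n * ζ ^ n) Filter.atTop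
      (nhds (F⁻¹ * (q ^ (n * (n + 1) / 2) * ζ ^ n))) := by
    intro n
    have := ((hGlim n).mul_const (q ^ (n * (n + 1) / 2) : ℂ)).mul_const (ζ ^ n)
    rw [mul_assoc] at this
    exact this.congr fun N => by rw [tJ]
  -- uniform bound
  have hbound : ∀ (N : ℕ) (n : ℤ), ‖tJ q N n * ζ ^ n‖
      ≤ M * (r ^ (n * (n + 1) / 2).toNat * c ^ n.natAbs) := by
    intro N n
    rw [tJ, norm_mul, norm_mul]
    have h1 : ‖Gq q (2*N) ((N:ℤ) + n)‖ ≤ M := Gq_bound hq N n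
    have h2 : ‖q ^ (n * (n + 1) / 2)‖ = r ^ (n * (n + 1) / 2).toNat := by
      have hcast : (q : ℂ) ^ (n * (n + 1) / 2) = q ^ ((n * (n + 1) / 2).toNat : ℕ) := by
        rw [← zpow_natCast, Int.toNat_of_nonneg (tri_nonneg n)]
      rw [hcast, norm_pow]
    have h3 : ‖ζ ^ n‖ ≤ c ^ n.natAbs := zeta_zpow_bound ζ hζ n
    rw [h2]
    have e1 : ‖Gq q (2*N) ((N:ℤ) + n)‖ * r ^ (n * (n + 1) / 2).toNat *
        ‖ζ ^ n‖ ≤ M * r ^ (n * (n + 1) / 2).toNat * (c ^ n.natAbs) := by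
      apply mul_le_mul (mul_le_mul_of_nonneg_right h1 (by positivity)) h3
        (norm_nonneg _) (by positivity)
    calc ‖Gq q (2*N) ((N:ℤ) + n)‖ * r ^ (n * (n + 1) / 2).toNat *
        ‖ζ ^ n‖ ≤ M * r ^ (n * (n + 1) / 2).toNat * (c ^ n.natAbs) := e1
      _ = M * (r ^ (n * (n + 1) / 2).toNat * c ^ n.natAbs) := by ring
  -- Tannery
  have hsum : Summable (fun n : ℤ => M * (r ^ (n * (n + 1) / 2).toNat * c ^ n.natAbs)) :=
    (bound_summable hr0 hq hc0).mul_left M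
  have tann := tendsto_tsum_of_dominated_convergence hsum htJ
    (Filter.Eventually.of_forall hbound)
  -- finite sums equal the partial products
  have hflip : ∀ N : ℕ, (∑' n : ℤ, tJ q N n * ζ ^ n)
      = ∏ j ∈ Finset.range N, ((1 + ζ * q ^ (j+1)) * (1 + ζ⁻¹ * q ^ j)) := by
    intro N
    rw [finite_jtp hq hq0 ζ hζ N]
    apply tsum_eq_sum
    intro n hn
    simp only [Finset.mem_Icc, not_and_or, not_le] at hn
    rcases hn with h | h
    · rw [tJ_zero_of_lt h, zero_mul]
    · rw [tJ_zero_of_gt h, zero_mul]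
  rw [show (fun N : ℕ => ∑' n : ℤ, tJ q N n * ζ ^ n)
      = fun N => ∏ j ∈ Finset.range N, ((1 + ζ * q ^ (j+1)) * (1 + ζ⁻¹ * q ^ j))
      from funext hflip] at tann
  have key := tendsto_nhds_unique hLHS tann
  rw [key, tsum_mul_left]
  field_simp

section Integral

omit hq

lemma abs_q_tri (n : ℤ) :
    ‖q ^ (n * (n + 1) / 2)‖ = ‖q‖ ^ (n * (n + 1) / 2).toNat := by
  have hcast : (q : ℂ) ^ (n * (n + 1) / 2) = q ^ ((n * (n + 1) / 2).toNat : ℕ) := by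
    rw [← zpow_natCast, Int.toNat_of_nonneg (tri_nonneg n)]
  rw [hcast, norm_pow]

include hq in
lemma a_norm_summable : Summable (fun n : ℤ => ‖(q ^ (n * (n + 1) / 2) : ℂ)‖) := by
  have := bound_summable (norm_nonneg q) hq (zero_le_one)
  simp only [one_pow, mul_one] at this
  apply this.congr
  intro n
  rw [abs_q_tri]

lemma int_exp (m : ℤ) :
    (∫ t in (0:ℝ)..1, Complex.exp ((2 * (Real.pi:ℂ) * I * m) * t))
      = if m = 0 then 1 else 0 := by
  rcases eq_or_ne m 0 with rfl | hm
  · simp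
  · rw [if_neg hm]
    have hc : (2 * (Real.pi:ℂ) * I * m) ≠ 0 := by
      simp [Complex.ext_iff, Real.pi_ne_zero, hm]
    rw [integral_exp_mul_complex hc]
    rw [show (2 * (Real.pi:ℂ) * I * m) * (1:ℝ) = m * (2 * Real.pi * I) by push_cast; ring]
    rw [Complex.exp_int_mul_two_pi_mul_I m]
    norm_num

lemma tri_add (n : ℤ) : (-n) * (-n + 1) / 2 + n * (n + 1) / 2 = n * n := by
  have h1 := half_mul (-n)
  have h2 := half_mul n
  have h3 : (-n) * (-n + 1) = n * n - n := by ring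
  have h4 : n * (n + 1) = n * n + n := by ring
  linarith

lemma zt_zpow (t : ℝ) (m : ℤ) :
    Complex.exp (2 * (Real.pi:ℂ) * I * t) ^ m
      = Complex.exp ((2 * (Real.pi:ℂ) * I * m) * t) := by
  rw [← Complex.exp_int_mul]
  congr 1
  ring

lemma abs_zt_zpow (t : ℝ) (m : ℤ) :
    ‖Complex.exp ((2 * (Real.pi:ℂ) * I * (m:ℂ)) * t)‖ = 1 := by
  rw [Complex.norm_exp]
  have : ((2 * (Real.pi:ℂ) * I * m) * t).re = 0 := by
    simp [Complex.mul_re, Complex.mul_im]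
  rw [this, Real.exp_zero]

include hq hq0 in
lemma integral_S_sq :
    (∫ t in (0:ℝ)..1,
      (∑' n : ℤ, q ^ (n * (n + 1) / 2) * Complex.exp (2 * (Real.pi:ℂ) * I * t) ^ n) ^ 2)
      = ∑' n : ℤ, q ^ (n * n : ℤ) := by
  set a : ℤ → ℂ := fun n => q ^ (n * (n + 1) / 2) with ha
  set F : ℤ × ℤ → ℝ → ℂ := fun z t =>
    a z.1 * a z.2 * Complex.exp ((2 * (Real.pi:ℂ) * I * ((z.1 + z.2 : ℤ) : ℂ)) * t) with hF
  have hanorm := a_norm_summable hq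
  -- step 1: expand the square into a double sum
  have step1 : ∀ t : ℝ,
      (∑' n : ℤ, a n * Complex.exp (2 * (Real.pi:ℂ) * I * t) ^ n) ^ 2
        = ∑' z : ℤ × ℤ, F z t := by
    intro t
    have hnorm : Summable (fun n : ℤ =>
        ‖a n * Complex.exp (2 * (Real.pi:ℂ) * I * t) ^ n‖) := by
      apply hanorm.congr
      intro n
      rw [norm_mul, zt_zpow, abs_zt_zpow, mul_one]
    rw [sq, tsum_mul_tsum_of_summable_norm hnorm hnorm]
    apply tsum_congr
    intro z
    rw [hF]
    simp only
    rw [zt_zpow, zt_zpow]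
    have hmerge : Complex.exp ((2 * (Real.pi:ℂ) * I * z.1) * t)
        * Complex.exp ((2 * (Real.pi:ℂ) * I * z.2) * t)
        = Complex.exp ((2 * (Real.pi:ℂ) * I * ((z.1 + z.2 : ℤ) : ℂ)) * t) := by
      rw [← Complex.exp_add]
      congr 1
      push_cast
      ring
    rw [mul_mul_mul_comm, hmerge]
  rw [intervalIntegral.integral_congr (g := fun t : ℝ => ∑' z : ℤ × ℤ, F z t)
    (fun t _ => step1 t)]
  -- step 2: swap integral and sum
  have hFnorm : ∀ (z : ℤ × ℤ) (t : ℝ), ‖F z t‖ = ‖a z.1‖ * ‖a z.2‖ := by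
    intro z t
    rw [hF]
    simp only
    rw [norm_mul, norm_mul, abs_zt_zpow, mul_one]
  have hcont : ∀ z : ℤ × ℤ, Continuous (F z) := by
    intro z
    apply Continuous.mul continuous_const
    apply Complex.continuous_exp.comp
    exact (continuous_const.mul Complex.continuous_ofReal)
  have hint : ∀ z : ℤ × ℤ, MeasureTheory.IntegrableOn (F z) (Set.Ioc (0:ℝ) 1) := by
    intro z
    exact (hcont z).integrableOn_Ioc
  have hsummul : Summable (fun z : ℤ × ℤ => ‖a z.1‖ * ‖a z.2‖) := by
    apply (Summable.mul_norm hanorm hanorm).congr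
    intro z
    rw [norm_mul]
  have hswap : (∫ t in Set.Ioc (0:ℝ) 1, ∑' z : ℤ × ℤ, F z t)
      = ∑' z : ℤ × ℤ, ∫ t in Set.Ioc (0:ℝ) 1, F z t := by
    refine (MeasureTheory.integral_tsum_of_summable_integral_norm hint ?_).symm
    apply hsummul.congr
    intro z
    rw [show (fun t => ‖F z t‖) = fun _ : ℝ => ‖a z.1‖ * ‖a z.2‖ from funext (hFnorm z)]
    rw [MeasureTheory.integral_const]
    simp [Real.volume_Ioc]
  rw [intervalIntegral.integral_of_le (by norm_num : (0:ℝ) ≤ 1), hswap]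
  -- step 3: compute each integral
  have hcast : ∀ z : ℤ × ℤ, (∫ t in Set.Ioc (0:ℝ) 1, F z t)
      = a z.1 * a z.2 * (if z.1 + z.2 = 0 then 1 else 0) := by
    intro z
    rw [hF]
    simp only
    rw [MeasureTheory.integral_const_mul, ← intervalIntegral.integral_of_le
      (by norm_num : (0:ℝ) ≤ 1), int_exp (z.1 + z.2)]
  rw [tsum_congr hcast]
  -- step 4: reindex and evaluate the diagonal
  set g : ℤ × ℤ → ℂ := fun z => a z.1 * a z.2 * (if z.1 + z.2 = 0 then 1 else 0) with hg
  have hgsum : Summable g := by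
    apply Summable.of_norm_bounded hsummul
    intro z
    rw [hg]
    simp only
    rcases eq_or_ne (z.1 + z.2) 0 with h | h
    · rw [if_pos h, mul_one, norm_mul]
    · rw [if_neg h, mul_zero, norm_zero]
      positivity
  set e : ℤ × ℤ ≃ ℤ × ℤ :=
    ⟨fun p => (p.1 - p.2, p.2), fun z => (z.1 + z.2, z.2),
      fun p => by simp, fun z => by simp⟩ with he
  have h1 : ∑' z : ℤ × ℤ, g z = ∑' p : ℤ × ℤ, g (e p) := (e.tsum_eq g).symm
  rw [h1]
  have hge : ∀ p : ℤ × ℤ, g (e p) = a (p.1 - p.2) * a p.2 * (if p.1 = 0 then 1 else 0) := by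
    intro p
    rw [hg, he]
    simp only [Equiv.coe_fn_mk]
    congr 2
    rw [show p.1 - p.2 + p.2 = p.1 by ring]
  rw [tsum_congr hge]
  have hsum2 : Summable (fun p : ℤ × ℤ => a (p.1 - p.2) * a p.2 * (if p.1 = 0 then 1 else 0)) := by
    have h2 := (e.summable_iff (f := g)).2 hgsum
    apply Summable.congr h2
    intro p
    simp only [Function.comp_apply]
    rw [hge p]
  have hinner : ∀ b : ℤ, Summable (fun c : ℤ => a (b - c) * a c * (if b = 0 then 1 else 0)) := by
    intro b
    rcases eq_or_ne b 0 with rfl | hb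
    · have hs : Summable (fun n : ℤ => a (0 - n) * a n) := by
        apply Summable.of_norm_bounded hanorm
        intro n
        rw [norm_mul]
        have h1 : ‖a (0 - n)‖ ≤ 1 := by
          rw [ha]
          simp only [zero_sub]
          rw [abs_q_tri]
          exact pow_le_one₀ (norm_nonneg q) hq.le
        calc ‖a (0 - n)‖ * ‖a n‖ ≤ 1 * ‖a n‖ :=
              mul_le_mul_of_nonneg_right h1 (norm_nonneg _)
          _ = ‖a n‖ := one_mul _
      apply hs.congr
      intro n
      simp
    · apply summable_zero.congr
      intro n
      simp [hb]
  rw [Summable.tsum_prod' hsum2 hinner]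
  rw [tsum_eq_single (0 : ℤ) (fun b hb => by
    have : ∀ c : ℤ, a (b - c) * a c * (if b = 0 then 1 else 0) = 0 := by
      intro c
      simp [hb]
    rw [tsum_congr this, tsum_zero])]
  apply tsum_congr
  intro c
  rw [if_pos rfl, mul_one, ha]
  simp only [zero_sub]
  rw [← zpow_add₀ hq0]
  congr 1
  exact tri_add c

end Integral

section Final

include hq in
lemma one_add_pow_ne (n : ℕ) (hn : 1 ≤ n) : 1 + q ^ n ≠ 0 := by
  intro h
  have h2 : ‖q ^ n‖ < 1 := by
    rw [norm_pow]
    calc ‖q‖ ^ n ≤ ‖q‖ ^ 1 :=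
          pow_le_pow_of_le_one (norm_nonneg q) hq.le hn
      _ < 1 := by simpa using hq
  have h3 : q ^ n = -1 := by linear_combination h
  rw [h3] at h2
  simp at h2

include hq in
lemma habs2 : ‖q ^ 2‖ < 1 := by
  rw [norm_pow]
  exact pow_lt_one₀ (norm_nonneg q) hq (by norm_num)

include hq in
lemma habs4 : ‖q ^ 4‖ < 1 := by
  rw [norm_pow]
  exact pow_lt_one₀ (norm_nonneg q) hq (by norm_num)

include hq hq0 in
/-- The theta series as a product. -/
lemma phi_eq : ∑' n : ℤ, q ^ (n * n : ℤ)
    = qPoch (-q) (q^2) * qPoch (-q) (q^2) * qPoch (q^2) (q^2) := by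
  have hq20 : (q:ℂ)^2 ≠ 0 := pow_ne_zero _ hq0
  have hj := jtp (habs2 hq) hq20 q⁻¹ (inv_ne_zero hq0)
  have e1 : -q⁻¹ * q^2 = -q := by field_simp [sq]
  have e2 : (q⁻¹)⁻¹ = q := inv_inv q
  rw [e1, e2] at hj
  rw [hj]
  apply tsum_congr
  intro n
  have e3 : ((q:ℂ)^2) ^ (n * (n + 1) / 2) = q ^ (2 * (n * (n + 1) / 2)) := by
    rw [show ((q:ℂ)^2) = q ^ ((2:ℕ):ℤ) by rw [zpow_natCast], ← zpow_mul]
    norm_num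
  have e4 : ((q:ℂ)⁻¹) ^ n = q ^ (-n) := by
    rw [inv_zpow, ← zpow_neg]
  rw [e3, e4, ← zpow_add₀ hq0]
  congr 1
  have := half_mul n
  have h4 : n * (n + 1) = n * n + n := by ring
  linarith

include hq in
lemma qPoch_split (a : ℂ) : qPoch a q = qPoch a (q^2) * qPoch (a * q) (q^2) := by
  have he : Multipliable (fun k : ℕ => 1 - a * q ^ (2 * k)) := by
    apply (qPoch_multipliable (habs2 hq) a).congr
    intro k
    ring_nf
  have ho : Multipliable (fun k : ℕ => 1 - a * q ^ (2 * k + 1)) := by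
    apply (qPoch_multipliable (habs2 hq) (a * q)).congr
    intro k
    ring_nf
  have heo := tprod_even_mul_odd (f := fun n : ℕ => 1 - a * q ^ n) he ho
  rw [qPoch, ← heo, qPoch, qPoch]
  congr 1
  · apply tprod_congr
    intro k
    show 1 - a * q ^ (2 * k) = 1 - a * (q ^ 2) ^ k
    rw [pow_mul]
  · apply tprod_congr
    intro k
    show 1 - a * q ^ (2 * k + 1) = 1 - a * q * (q ^ 2) ^ k
    rw [pow_add, pow_mul]
    ring

include hq in
lemma qPoch_sq_split : qPoch (q^2) (q^4) = qPoch q (q^2) * qPoch (-q) (q^2) := by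
  have h1 : Multipliable (fun n : ℕ => 1 - q * (q^2) ^ n) := qPoch_multipliable (habs2 hq) q
  have h2 : Multipliable (fun n : ℕ => 1 - (-q) * (q^2) ^ n) := qPoch_multipliable (habs2 hq) (-q)
  rw [qPoch, qPoch, qPoch, ← Multipliable.tprod_mul h1 h2]
  apply tprod_congr
  intro n
  ring

include hq hq0 in
theorem CPhi2_main :
    (∫ t in (0:ℝ)..1,
        qPoch (-(Complex.exp (2 * (Real.pi : ℂ) * I * t)) * q) q ^ 2 *
          qPoch (-(Complex.exp (2 * (Real.pi : ℂ) * I * t))⁻¹) q ^ 2) =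
      qPoch (q ^ 2) (q ^ 4) / (qPoch q (q ^ 2) ^ 4 * qPoch (q ^ 4) (q ^ 4)) := by
  have hF : qPoch q q ≠ 0 := qPoch_q_ne_zero hq
  -- rewrite the integrand using the Jacobi triple product
  have key : ∀ t : ℝ,
      qPoch (-(Complex.exp (2 * (Real.pi : ℂ) * I * t)) * q) q ^ 2 *
        qPoch (-(Complex.exp (2 * (Real.pi : ℂ) * I * t))⁻¹) q ^ 2
      = ((qPoch q q)⁻¹) ^ 2 *
        (∑' n : ℤ, q ^ (n * (n + 1) / 2) *
          Complex.exp (2 * (Real.pi : ℂ) * I * t) ^ n) ^ 2 := by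
    intro t
    set ζ := Complex.exp (2 * (Real.pi : ℂ) * I * t) with hζdef
    have hζ : ζ ≠ 0 := Complex.exp_ne_zero _
    have hj := jtp hq hq0 ζ hζ
    have h2 : qPoch (-ζ * q) q * qPoch (-ζ⁻¹) q
        = (qPoch q q)⁻¹ * ∑' n : ℤ, q ^ (n * (n + 1) / 2) * ζ ^ n := by
      rw [← hj]
      field_simp
    calc qPoch (-ζ * q) q ^ 2 * qPoch (-ζ⁻¹) q ^ 2
        = (qPoch (-ζ * q) q * qPoch (-ζ⁻¹) q) ^ 2 := by ring
      _ = ((qPoch q q)⁻¹ * ∑' n : ℤ, q ^ (n * (n + 1) / 2) * ζ ^ n) ^ 2 := by rw [h2]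
      _ = _ := by ring
  rw [intervalIntegral.integral_congr (fun t _ => key t),
    intervalIntegral.integral_const_mul, integral_S_sq hq hq0, phi_eq hq hq0]
  -- now pure product algebra
  have sa : qPoch q q = qPoch q (q^2) * qPoch (q^2) (q^2) := by
    have := qPoch_split hq q
    rwa [show (q:ℂ) * q = q^2 by ring] at this
  have sc : qPoch (q^2) (q^2) = qPoch (q^2) ((q^2)^2) * qPoch ((q^2)*(q^2)) ((q^2)^2) :=
    qPoch_split (habs2 hq) (q^2)
  rw [show ((q:ℂ)^2)^2 = q^4 by ring, show (q:ℂ)^2 * q^2 = q^4 by ring] at sc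
  have sb : qPoch (q^2) (q^4) = qPoch q (q^2) * qPoch (-q) (q^2) := qPoch_sq_split hq
  have nX : qPoch q (q^2) ≠ 0 := by
    apply qPoch_ne_zero (habs2 hq)
    intro n
    rw [show (q:ℂ) * (q^2)^n = q ^ (2*n+1) by rw [pow_add, pow_mul]; ring]
    exact one_sub_pow_ne hq (2*n+1) (by omega)
  have nY : qPoch (q^2) (q^4) ≠ 0 := by
    apply qPoch_ne_zero (habs4 hq)
    intro n
    rw [show (q:ℂ)^2 * (q^4)^n = q ^ (4*n+2) by rw [pow_add, pow_mul]; ring]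
    exact one_sub_pow_ne hq (4*n+2) (by omega)
  have nZ : qPoch (q^4) (q^4) ≠ 0 := by
    apply qPoch_ne_zero (habs4 hq)
    intro n
    rw [show (q:ℂ)^4 * (q^4)^n = q ^ (4*n+4) by rw [pow_add, pow_mul]; ring]
    exact one_sub_pow_ne hq (4*n+4) (by omega)
  have nW : qPoch (-q) (q^2) ≠ 0 := by
    apply qPoch_ne_zero (habs2 hq)
    intro n
    rw [show (1:ℂ) - (-q) * (q^2)^n = 1 + q ^ (2*n+1) by rw [pow_add, pow_mul]; ring]
    exact one_add_pow_ne hq (2*n+1) (by omega)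
  rw [sa, sc, sb]
  field_simp

end Final

end Aux

/-- Andrews' formula for `CΦ₂(q)`: the constant term in `ζ` of
`(-ζq;q)_∞² (-ζ⁻¹;q)_∞²`, computed as `∫_0^1` over `ζ = e^{2πit}`. -/
theorem CPhi2_formula (q : ℂ) (hq : ‖q‖ < 1) (hq0 : q ≠ 0) :
    (∫ t in (0:ℝ)..1,
        qPoch (-(Complex.exp (2 * (Real.pi : ℂ) * I * t)) * q) q ^ 2 *
          qPoch (-(Complex.exp (2 * (Real.pi : ℂ) * I * t))⁻¹) q ^ 2) =
      qPoch (q ^ 2) (q ^ 4) / (qPoch q (q ^ 2) ^ 4 * qPoch (q ^ 4) (q ^ 4)) := by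
  exact CPhi2_main hq hq0
end

section
/- The h₂ decomposition: ϑ(z+1/2;τ)⁴ = h_{2,0}(τ) ϑ_{2,0}(z;τ) + h_{2,1}(τ)(ϑ_{2,1}(z;τ) + ϑ_{2,3}(z;τ)) + h_{2,2}(τ) ϑ_{2,2}(z;τ), where h_{2,0} = θ_{1,1}² θ_{2,0} + θ_{1,0}² θ_{2,2}, h_{2,1} = 2 θ_{1,0} θ_{1,1} θ_{2,1}, and h_{2,2} = θ_{1,1}² θ_{2,2} + θ_{1,0}² θ_{2,0}. -/
open Complex

namespace ThetaAux

/-- Generic theta-type term. -/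
noncomputable def gt (τ : ℂ) (s c : ℝ) (w : ℂ) (n : ℤ) : ℂ :=
  Complex.exp ((Real.pi : ℂ) * I * τ * s * ((n : ℂ) + c) ^ 2 + w * ((n : ℂ) + c))

lemma two_pi_I_ne_zero : (2 * (Real.pi : ℂ) * I) ≠ 0 :=
  mul_ne_zero (mul_ne_zero two_ne_zero (Complex.ofReal_ne_zero.2 Real.pi_ne_zero)) Complex.I_ne_zero

lemma gt_eq_jacobi (τ : ℂ) (s c : ℝ) (w : ℂ) (n : ℤ) :
    gt τ s c w n = Complex.exp ((Real.pi : ℂ) * I * τ * s * c ^ 2 + w * c) *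
      jacobiTheta₂_term n ((2 * (Real.pi : ℂ) * I * τ * s * c + w) / (2 * (Real.pi : ℂ) * I))
        ((s : ℂ) * τ) := by
  have h2 : 2 * (Real.pi : ℂ) * I *
      ((2 * (Real.pi : ℂ) * I * τ * s * c + w) / (2 * (Real.pi : ℂ) * I)) =
      2 * (Real.pi : ℂ) * I * τ * s * c + w := mul_div_cancel₀ _ two_pi_I_ne_zero
  rw [gt, jacobiTheta₂_term, ← Complex.exp_add]
  congr 1
  linear_combination (-(n : ℂ)) * h2

lemma summable_norm_jacobi {z τ : ℂ} (hτ : 0 < τ.im) :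
    Summable fun n : ℤ => ‖jacobiTheta₂_term n z τ‖ := by
  refine Summable.of_nonneg_of_le (fun n => norm_nonneg _) ?_
    (summable_pow_mul_jacobiTheta₂_term_bound |z.im| hτ 0)
  intro n
  simpa only [pow_zero, one_mul] using norm_jacobiTheta₂_term_le hτ le_rfl le_rfl n

lemma summable_norm_gt {τ : ℂ} (hτ : 0 < τ.im) {s : ℝ} (hs : 0 < s) (c : ℝ) (w : ℂ) :
    Summable fun n : ℤ => ‖gt τ s c w n‖ := by
  have hsτ : 0 < ((s : ℂ) * τ).im := by
    have : ((s : ℂ) * τ).im = s * τ.im := by simp [Complex.mul_im]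
    rw [this]
    exact mul_pos hs hτ
  have key := (summable_norm_jacobi
    (z := (2 * (Real.pi : ℂ) * I * τ * s * c + w) / (2 * (Real.pi : ℂ) * I)) hsτ).mul_left
    ‖Complex.exp ((Real.pi : ℂ) * I * τ * s * c ^ 2 + w * c)‖
  refine key.congr fun n => ?_
  rw [gt_eq_jacobi, norm_mul]

lemma summable_norm_shape {τ : ℂ} (hτ : 0 < τ.im) {s : ℝ} (hs : 0 < s) (c : ℝ) (w : ℂ)
    {f : ℤ → ℂ} (hfe : ∀ n, f n = gt τ s c w n) :
    Summable fun n : ℤ => ‖f n‖ := by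
  simp_rw [hfe]; exact summable_norm_gt hτ hs c w

lemma tsum_sum_type {α β : Type*} (f : α ⊕ β → ℂ) (hf : Summable f) :
    ∑' x, f x = ∑' a, f (Sum.inl a) + ∑' b, f (Sum.inr b) := by
  have h1 : Summable (f ∘ Sum.inl) := hf.comp_injective Sum.inl_injective
  have h2 : Summable (f ∘ Sum.inr) := hf.comp_injective Sum.inr_injective
  have e1 : HasSum (f ∘ ((↑) : Set.range (Sum.inl : α → α ⊕ β) → α ⊕ β)) (∑' a, f (Sum.inl a)) := by
    rw [← (Equiv.ofInjective Sum.inl Sum.inl_injective).hasSum_iff]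
    exact h1.hasSum
  have e2 : HasSum (f ∘ ((↑) : Set.range (Sum.inr : β → α ⊕ β) → α ⊕ β)) (∑' b, f (Sum.inr b)) := by
    rw [← (Equiv.ofInjective Sum.inr Sum.inr_injective).hasSum_iff]
    exact h2.hasSum
  exact (e1.add_isCompl Set.isCompl_range_inl_range_inr e2).tsum_eq

/-- The reindexing bijection. -/
def E (p₁ p₂ q₁ q₂ : ℤ) (h : (p₁ + p₂ + q₁ + q₂) % 2 = 1) : (ℤ × ℤ) ⊕ (ℤ × ℤ) ≃ ℤ × ℤ where
  toFun := Sum.elim (fun y => (y.2 + y.1 + p₁, y.2 - y.1 + p₂))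
    (fun y => (y.2 + y.1 + q₁, y.2 - y.1 + q₂))
  invFun x := if (x.1 + x.2 - p₁ - p₂) % 2 = 0 then
      Sum.inl ((x.1 - x.2 - p₁ + p₂) / 2, (x.1 + x.2 - p₁ - p₂) / 2)
    else Sum.inr ((x.1 - x.2 - q₁ + q₂) / 2, (x.1 + x.2 - q₁ - q₂) / 2)
  left_inv := by
    rintro (⟨j, k⟩ | ⟨j, k⟩) <;> dsimp only [Sum.elim_inl, Sum.elim_inr]
    · rw [if_pos (by omega)]
      simp only [Sum.inl.injEq, Prod.mk.injEq]
      omega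
    · rw [if_neg (by omega)]
      simp only [Sum.inr.injEq, Prod.mk.injEq]
      omega
  right_inv := by
    rintro ⟨m, n⟩
    dsimp only
    split_ifs with h0 <;>
      simp only [Sum.elim_inl, Sum.elim_inr, Prod.mk.injEq] <;> omega

lemma engine (f g F₁ G₁ F₂ G₂ : ℤ → ℂ)
    (hf : Summable fun n => ‖f n‖) (hg : Summable fun n => ‖g n‖)
    (hF₁ : Summable fun n => ‖F₁ n‖) (hG₁ : Summable fun n => ‖G₁ n‖)
    (hF₂ : Summable fun n => ‖F₂ n‖) (hG₂ : Summable fun n => ‖G₂ n‖)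
    (e : (ℤ × ℤ) ⊕ (ℤ × ℤ) ≃ ℤ × ℤ)
    (h1 : ∀ j k : ℤ, f (e (Sum.inl (j, k))).1 * g (e (Sum.inl (j, k))).2 = F₁ j * G₁ k)
    (h2 : ∀ j k : ℤ, f (e (Sum.inr (j, k))).1 * g (e (Sum.inr (j, k))).2 = F₂ j * G₂ k) :
    (∑' n, f n) * (∑' n, g n) =
      (∑' n, F₁ n) * (∑' n, G₁ n) + (∑' n, F₂ n) * (∑' n, G₂ n) := by
  have hs : Summable fun p : ℤ × ℤ => f p.1 * g p.2 := summable_mul_of_summable_norm hf hg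
  rw [tsum_mul_tsum_of_summable_norm hf hg, tsum_mul_tsum_of_summable_norm hF₁ hG₁,
    tsum_mul_tsum_of_summable_norm hF₂ hG₂,
    ← e.tsum_eq (fun p : ℤ × ℤ => f p.1 * g p.2),
    tsum_sum_type (fun x => f (e x).1 * g (e x).2) (e.summable_iff.mpr hs)]
  congr 1
  · exact tsum_congr fun p => by obtain ⟨j, k⟩ := p; exact h1 j k
  · exact tsum_congr fun p => by obtain ⟨j, k⟩ := p; exact h2 j k

end ThetaAux

open ThetaAux

namespace ThetaAux

lemma exp_mul_exp_eq (X₁ X₂ Y₁ Y₂ : ℂ) (t : ℤ)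
    (h : X₁ + X₂ = Y₁ + Y₂ + (t : ℂ) * (2 * (Real.pi : ℂ) * I)) :
    Complex.exp X₁ * Complex.exp X₂ = Complex.exp Y₁ * Complex.exp Y₂ := by
  rw [← Complex.exp_add, ← Complex.exp_add, h, Complex.exp_add,
    Complex.exp_int_mul_two_pi_mul_I, mul_one]

lemma thetaMA_eq_gt (z τ : ℂ) (m a s c : ℝ) (w : ℂ) (hm : m ≠ 0)
    (hs : (s : ℂ) = 2 * (m : ℂ)) (hc : (c : ℂ) = (a : ℂ) / (2 * (m : ℂ)))
    (hw : w = 4 * (Real.pi : ℂ) * I * z * (m : ℂ)) :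
    thetaMA m a z τ = ∑' n : ℤ, gt τ s c w n := by
  unfold thetaMA gt
  refine tsum_congr fun n => ?_
  congr 1
  rw [hs, hc, hw]
  have hm' : (m : ℂ) ≠ 0 := Complex.ofReal_ne_zero.2 hm
  field_simp
  ring

lemma thetaC_eq_gt (τ : ℂ) (m a s c : ℝ) (hm : m ≠ 0)
    (hs : (s : ℂ) = 2 * (m : ℂ)) (hc : (c : ℂ) = (a : ℂ) / (2 * (m : ℂ))) :
    thetaC m a τ = ∑' n : ℤ, gt τ s c 0 n := by
  rw [thetaC, thetaMA_eq_gt 0 τ m a s c (4 * (Real.pi : ℂ) * I * 0 * (m : ℂ)) hm hs hc rfl]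
  refine tsum_congr fun n => ?_
  rw [gt, gt]
  congr 1
  ring

lemma jTheta_shift_eq (z τ : ℂ) :
    jTheta (z + 1/2) τ = ∑' n : ℤ, gt τ 1 (1/2) (2 * (Real.pi : ℂ) * I * (z + 1)) n := by
  unfold jTheta gt
  refine tsum_congr fun n => ?_
  congr 1
  push_cast
  ring

end ThetaAux

/-- The `h₂` theta decomposition of `ϑ(z+1/2;τ)⁴`. -/
theorem theta_fourth_decomposition (τ z : ℂ) (hτ : 0 < τ.im) :
    jTheta (z + 1/2) τ ^ 4 =
      (thetaC 1 1 τ ^ 2 * thetaC 2 0 τ + thetaC 1 0 τ ^ 2 * thetaC 2 2 τ) * thetaMA 2 0 z τ +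
      (2 * thetaC 1 0 τ * thetaC 1 1 τ * thetaC 2 1 τ) * (thetaMA 2 1 z τ + thetaMA 2 3 z τ) +
      (thetaC 1 1 τ ^ 2 * thetaC 2 2 τ + thetaC 1 0 τ ^ 2 * thetaC 2 0 τ) * thetaMA 2 2 z τ := by
  set w0 : ℂ := 2 * (Real.pi : ℂ) * I * (z + 1) with hw0
  set wz : ℂ := 4 * (Real.pi : ℂ) * I * z with hwz
  set wz' : ℂ := 8 * (Real.pi : ℂ) * I * z with hwz'
  -- bridges
  have hj : jTheta (z + 1/2) τ = ∑' n : ℤ, gt τ 1 (1/2) w0 n := jTheta_shift_eq z τ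
  have hV10 : thetaMA 1 0 z τ = ∑' n : ℤ, gt τ 2 0 wz n :=
    thetaMA_eq_gt z τ 1 0 2 0 wz (by norm_num) (by norm_num) (by norm_num)
      (by rw [hwz]; push_cast; ring)
  have hV11 : thetaMA 1 1 z τ = ∑' n : ℤ, gt τ 2 (1/2) wz n :=
    thetaMA_eq_gt z τ 1 1 2 (1/2) wz (by norm_num) (by norm_num) (by norm_num)
      (by rw [hwz]; push_cast; ring)
  have hT10 : thetaC 1 0 τ = ∑' n : ℤ, gt τ 2 0 0 n :=
    thetaC_eq_gt τ 1 0 2 0 (by norm_num) (by norm_num) (by norm_num)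
  have hT11 : thetaC 1 1 τ = ∑' n : ℤ, gt τ 2 (1/2) 0 n :=
    thetaC_eq_gt τ 1 1 2 (1/2) (by norm_num) (by norm_num) (by norm_num)
  have hU0 : thetaMA 2 0 z τ = ∑' n : ℤ, gt τ 4 0 wz' n :=
    thetaMA_eq_gt z τ 2 0 4 0 wz' (by norm_num) (by norm_num) (by norm_num)
      (by rw [hwz']; push_cast; ring)
  have hU1 : thetaMA 2 1 z τ = ∑' n : ℤ, gt τ 4 (1/4) wz' n :=
    thetaMA_eq_gt z τ 2 1 4 (1/4) wz' (by norm_num) (by norm_num) (by norm_num)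
      (by rw [hwz']; push_cast; ring)
  have hU2 : thetaMA 2 2 z τ = ∑' n : ℤ, gt τ 4 (1/2) wz' n :=
    thetaMA_eq_gt z τ 2 2 4 (1/2) wz' (by norm_num) (by norm_num) (by norm_num)
      (by rw [hwz']; push_cast; ring)
  have hU3 : thetaMA 2 3 z τ = ∑' n : ℤ, gt τ 4 (3/4) wz' n :=
    thetaMA_eq_gt z τ 2 3 4 (3/4) wz' (by norm_num) (by norm_num) (by norm_num)
      (by rw [hwz']; push_cast; ring)
  have hW0 : thetaC 2 0 τ = ∑' n : ℤ, gt τ 4 0 0 n :=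
    thetaC_eq_gt τ 2 0 4 0 (by norm_num) (by norm_num) (by norm_num)
  have hW1 : thetaC 2 1 τ = ∑' n : ℤ, gt τ 4 (1/4) 0 n :=
    thetaC_eq_gt τ 2 1 4 (1/4) (by norm_num) (by norm_num) (by norm_num)
  have hW2 : thetaC 2 2 τ = ∑' n : ℤ, gt τ 4 (1/2) 0 n :=
    thetaC_eq_gt τ 2 2 4 (1/2) (by norm_num) (by norm_num) (by norm_num)
  have hW3 : thetaC 2 3 τ = ∑' n : ℤ, gt τ 4 (3/4) 0 n :=
    thetaC_eq_gt τ 2 3 4 (3/4) (by norm_num) (by norm_num) (by norm_num)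
  -- θ_{2,3} = θ_{2,1}
  have c23 : (∑' n : ℤ, gt τ 4 (3/4) 0 n) = ∑' n : ℤ, gt τ 4 (1/4) 0 n := by
    rw [← ((Equiv.neg ℤ).trans (Equiv.subRight 1)).tsum_eq (gt τ 4 (1/4) 0)]
    refine tsum_congr fun n => ?_
    simp only [Equiv.trans_apply, Equiv.neg_apply, Equiv.subRight_apply, gt]
    congr 1
    push_cast
    ring
  -- summability
  have S : ∀ (c : ℝ) (w : ℂ), Summable fun n : ℤ => ‖gt τ 2 c w n‖ :=
    fun c w => summable_norm_gt hτ (by norm_num) c w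
  have S1 : ∀ (c : ℝ) (w : ℂ), Summable fun n : ℤ => ‖gt τ 1 c w n‖ :=
    fun c w => summable_norm_gt hτ (by norm_num) c w
  have S4 : ∀ (c : ℝ) (w : ℂ), Summable fun n : ℤ => ‖gt τ 4 c w n‖ :=
    fun c w => summable_norm_gt hτ (by norm_num) c w
  -- the four product decompositions
  have sq1 : (∑' n : ℤ, gt τ 1 (1/2) w0 n) * (∑' n : ℤ, gt τ 1 (1/2) w0 n) =
      (∑' n : ℤ, gt τ 2 (1/2) 0 n) * (∑' n : ℤ, gt τ 2 0 wz n) +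
      (∑' n : ℤ, gt τ 2 0 0 n) * (∑' n : ℤ, gt τ 2 (1/2) wz n) := by
    refine engine _ _ _ _ _ _ (S1 _ _) (S1 _ _) (S _ _) (S _ _) (S _ _) (S _ _)
      (E 0 (-1) 0 0 (by decide)) (fun j k => ?_) (fun j k => ?_) <;>
      simp only [E, Equiv.coe_fn_mk, Sum.elim_inl, Sum.elim_inr, gt, hw0, hwz]
    · exact exp_mul_exp_eq _ _ _ _ (2 * k) (by push_cast; ring)
    · exact exp_mul_exp_eq _ _ _ _ (2 * k + 1) (by push_cast; ring)
  have sq2 : (∑' n : ℤ, gt τ 2 0 wz n) * (∑' n : ℤ, gt τ 2 0 wz n) =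
      (∑' n : ℤ, gt τ 4 0 0 n) * (∑' n : ℤ, gt τ 4 0 wz' n) +
      (∑' n : ℤ, gt τ 4 (1/2) 0 n) * (∑' n : ℤ, gt τ 4 (1/2) wz' n) := by
    refine engine _ _ _ _ _ _ (S _ _) (S _ _) (S4 _ _) (S4 _ _) (S4 _ _) (S4 _ _)
      (E 0 0 1 0 (by decide)) (fun j k => ?_) (fun j k => ?_) <;>
      simp only [E, Equiv.coe_fn_mk, Sum.elim_inl, Sum.elim_inr, gt, hwz, hwz'] <;>
      exact exp_mul_exp_eq _ _ _ _ 0 (by push_cast; ring)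
  have sq3 : (∑' n : ℤ, gt τ 2 (1/2) wz n) * (∑' n : ℤ, gt τ 2 (1/2) wz n) =
      (∑' n : ℤ, gt τ 4 (1/2) 0 n) * (∑' n : ℤ, gt τ 4 0 wz' n) +
      (∑' n : ℤ, gt τ 4 0 0 n) * (∑' n : ℤ, gt τ 4 (1/2) wz' n) := by
    refine engine _ _ _ _ _ _ (S _ _) (S _ _) (S4 _ _) (S4 _ _) (S4 _ _) (S4 _ _)
      (E 0 (-1) 0 0 (by decide)) (fun j k => ?_) (fun j k => ?_) <;>
      simp only [E, Equiv.coe_fn_mk, Sum.elim_inl, Sum.elim_inr, gt, hwz, hwz'] <;>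
      exact exp_mul_exp_eq _ _ _ _ 0 (by push_cast; ring)
  have sq4 : (∑' n : ℤ, gt τ 2 0 wz n) * (∑' n : ℤ, gt τ 2 (1/2) wz n) =
      (∑' n : ℤ, gt τ 4 (3/4) 0 n) * (∑' n : ℤ, gt τ 4 (1/4) wz' n) +
      (∑' n : ℤ, gt τ 4 (1/4) 0 n) * (∑' n : ℤ, gt τ 4 (3/4) wz' n) := by
    refine engine _ _ _ _ _ _ (S _ _) (S _ _) (S4 _ _) (S4 _ _) (S4 _ _) (S4 _ _)
      (E 1 (-1) 1 0 (by decide)) (fun j k => ?_) (fun j k => ?_) <;>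
      simp only [E, Equiv.coe_fn_mk, Sum.elim_inl, Sum.elim_inr, gt, hwz, hwz'] <;>
      exact exp_mul_exp_eq _ _ _ _ 0 (by push_cast; ring)
  rw [hj, hV10, hV11, hT10, hT11, hU0, hU1, hU2, hU3, hW0, hW1, hW2, hW3] at *
  calc (∑' n : ℤ, gt τ 1 (1/2) w0 n) ^ 4
      = ((∑' n : ℤ, gt τ 1 (1/2) w0 n) * (∑' n : ℤ, gt τ 1 (1/2) w0 n)) *
        ((∑' n : ℤ, gt τ 1 (1/2) w0 n) * (∑' n : ℤ, gt τ 1 (1/2) w0 n)) := by ring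
    _ = ((∑' n : ℤ, gt τ 2 (1/2) 0 n) * (∑' n : ℤ, gt τ 2 0 wz n) +
        (∑' n : ℤ, gt τ 2 0 0 n) * (∑' n : ℤ, gt τ 2 (1/2) wz n)) *
        ((∑' n : ℤ, gt τ 2 (1/2) 0 n) * (∑' n : ℤ, gt τ 2 0 wz n) +
        (∑' n : ℤ, gt τ 2 0 0 n) * (∑' n : ℤ, gt τ 2 (1/2) wz n)) := by rw [sq1]
    _ = (∑' n : ℤ, gt τ 2 (1/2) 0 n) ^ 2 *
          ((∑' n : ℤ, gt τ 2 0 wz n) * (∑' n : ℤ, gt τ 2 0 wz n)) +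
        (2 * (∑' n : ℤ, gt τ 2 (1/2) 0 n) * (∑' n : ℤ, gt τ 2 0 0 n)) *
          ((∑' n : ℤ, gt τ 2 0 wz n) * (∑' n : ℤ, gt τ 2 (1/2) wz n)) +
        (∑' n : ℤ, gt τ 2 0 0 n) ^ 2 *
          ((∑' n : ℤ, gt τ 2 (1/2) wz n) * (∑' n : ℤ, gt τ 2 (1/2) wz n)) := by ring
    _ = _ := by rw [sq2, sq3, sq4, c23]; ring
end
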